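/- Let (u_θ)_{θ∈I} be a smooth family of model eigenfunctions of H(θ) with eigenvalues σ(θ), and fix θ ∈ I. Define w₀ := −(σ'(θ)/2)(s ∂_s u_θ + t ∂_t u_θ) − σ(θ) ∂_θ u_θ. Then ∫_{ℝ²₊} (2σ'(θ)V_θ² − 2σ(θ)V_θ ∂_θV_θ) w₀ u_θ ds dt + ∫_{ℝ²₊} (σ(θ)∂_θV_θ − σ'(θ)V_θ)² u_θ² ds dt = (σ(θ)²σ''(θ) + σ(θ)³)/2. -/

import Mathlib

open Real MeasureTheory Set

noncomputable section

/-- Partial derivative with respect to the first variable. -/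
def pd1 (u : ℝ → ℝ → ℝ) : ℝ → ℝ → ℝ := fun s t => deriv (fun x => u x t) s

/-- Partial derivative with respect to the second variable. -/
def pd2 (u : ℝ → ℝ → ℝ) : ℝ → ℝ → ℝ := fun s t => deriv (fun y => u s y) t

/-- The potential `V_θ(s,t) = t cos θ − s sin θ`. -/
def Vpot (θ : ℝ) : ℝ → ℝ → ℝ := fun s t => t * Real.cos θ - s * Real.sin θ

/-- The operator `H(θ) = −∂_s² − ∂_t² + V_θ²` applied to `u`. -/
def Hop (θ : ℝ) (u : ℝ → ℝ → ℝ) : ℝ → ℝ → ℝ :=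
  fun s t => - pd1 (pd1 u) s t - pd2 (pd2 u) s t + (Vpot θ s t)^2 * u s t

/-- Integral over the half-plane `{t > 0}` with respect to `ds dt`. -/
def intHalf (f : ℝ → ℝ → ℝ) : ℝ := ∫ s : ℝ, ∫ t in Set.Ioi (0:ℝ), f s t

/-- Schwartz-class on the closed half-plane: all iterated partial derivatives decay
faster than any power of `|s| + t`. -/
def SchwartzHalf (u : ℝ → ℝ → ℝ) : Prop :=
  ∀ k l n : ℕ, ∃ C : ℝ, ∀ s t : ℝ, 0 ≤ t →
    |pd1^[k] (pd2^[l] u) s t| ≤ C * (1 + |s| + t) ^ (-(n:ℝ))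

/-- A model eigenfunction of `H(θ)` with eigenvalue `σ`: smooth up to the boundary,
Schwartz-class, `L²`-normalized, Neumann boundary condition, and `H(θ)u = σu` on `{t ≥ 0}`. -/
structure IsModelEigen (θ : ℝ) (u : ℝ → ℝ → ℝ) (σ : ℝ) : Prop where
  smooth : ∀ n : ℕ, ContDiff ℝ n (fun p : ℝ × ℝ => u p.1 p.2)
  schwartz : SchwartzHalf u
  normalized : intHalf (fun s t => (u s t)^2) = 1
  neumann : ∀ s : ℝ, pd2 u s 0 = 0
  eigen : ∀ s t : ℝ, 0 ≤ t → Hop θ u s t = σ * u s t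

/-- Partial derivative in the parameter `θ` of a family. -/
def pdθ (u : ℝ → ℝ → ℝ → ℝ) : ℝ → ℝ → ℝ → ℝ := fun θ s t => deriv (fun x => u x s t) θ

/-- A smooth family of model eigenfunctions of `H(θ)` with eigenvalues `σ(θ)`,
parametrized by the open interval `Ioo a b ⊆ (0, π/2)`: the map `(θ,s,t) ↦ u θ s t`
is smooth, all its partial derivatives are Schwartz-class in `(s,t)` locally uniformly
in `θ`, `σ` is smooth, and each `u θ` is a model eigenfunction of `H(θ)`. -/
structure IsSmoothFamily (a b : ℝ) (u : ℝ → ℝ → ℝ → ℝ) (σ : ℝ → ℝ) : Prop where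
  sub : Set.Ioo a b ⊆ Set.Ioo 0 (π/2)
  smooth : ∀ n : ℕ, ContDiffOn ℝ n (fun p : ℝ × ℝ × ℝ => u p.1 p.2.1 p.2.2)
      (Set.Ioo a b ×ˢ (Set.univ : Set (ℝ × ℝ)))
  sigma_smooth : ∀ n : ℕ, ContDiffOn ℝ n σ (Set.Ioo a b)
  schwartz : ∀ θ ∈ Set.Ioo a b, ∀ m k l n : ℕ, ∃ ε > 0, ∃ C : ℝ,
      ∀ θ' ∈ Set.Ioo a b, |θ' - θ| < ε → ∀ s t : ℝ, 0 ≤ t →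
      |pd1^[k] (pd2^[l] (pdθ^[m] u θ')) s t| ≤ C * (1 + |s| + t) ^ (-(n:ℝ))
  eigen : ∀ θ ∈ Set.Ioo a b, IsModelEigen θ (u θ) (σ θ)

section Calc

lemma hasDerivAt_slice1 {f : ℝ → ℝ → ℝ} {s t : ℝ}
    (hf : DifferentiableAt ℝ (fun p : ℝ × ℝ => f p.1 p.2) (s, t)) :
    HasDerivAt (fun x => f x t) (fderiv ℝ (fun p : ℝ × ℝ => f p.1 p.2) (s, t) (1, 0)) s := by
  have hc : HasDerivAt (fun x : ℝ => ((x, t) : ℝ × ℝ)) (1, 0) s :=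
    (hasDerivAt_id s).prodMk (hasDerivAt_const s t)
  exact hf.hasFDerivAt.comp_hasDerivAt s (f := fun x : ℝ => ((x, t) : ℝ × ℝ)) hc

lemma hasDerivAt_slice2 {f : ℝ → ℝ → ℝ} {s t : ℝ}
    (hf : DifferentiableAt ℝ (fun p : ℝ × ℝ => f p.1 p.2) (s, t)) :
    HasDerivAt (fun y => f s y) (fderiv ℝ (fun p : ℝ × ℝ => f p.1 p.2) (s, t) (0, 1)) t := by
  have hc : HasDerivAt (fun y : ℝ => ((s, y) : ℝ × ℝ)) (0, 1) t :=
    (hasDerivAt_const t s).prodMk (hasDerivAt_id t)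
  exact hf.hasFDerivAt.comp_hasDerivAt t (f := fun y : ℝ => ((s, y) : ℝ × ℝ)) hc

lemma pd1_eq_fderiv {f : ℝ → ℝ → ℝ} {s t : ℝ}
    (hf : DifferentiableAt ℝ (fun p : ℝ × ℝ => f p.1 p.2) (s, t)) :
    pd1 f s t = fderiv ℝ (fun p : ℝ × ℝ => f p.1 p.2) (s, t) (1, 0) :=
  (hasDerivAt_slice1 hf).deriv

lemma pd2_eq_fderiv {f : ℝ → ℝ → ℝ} {s t : ℝ}
    (hf : DifferentiableAt ℝ (fun p : ℝ × ℝ => f p.1 p.2) (s, t)) :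
    pd2 f s t = fderiv ℝ (fun p : ℝ × ℝ => f p.1 p.2) (s, t) (0, 1) :=
  (hasDerivAt_slice2 hf).deriv

lemma hasDerivAt_fderiv_apply {E : Type*} [NormedAddCommGroup E] [NormedSpace ℝ E]
    {G : E → ℝ} {c : ℝ → E} {w : E} {r₀ : ℝ}
    (hc : HasDerivAt c w r₀) (hG : ContDiffAt ℝ 2 G (c r₀)) (v : E) :
    HasDerivAt (fun r => fderiv ℝ G (c r) v) (fderiv ℝ (fderiv ℝ G) (c r₀) w v) r₀ := by
  have h1 : ContDiffAt ℝ 1 (fderiv ℝ G) (c r₀) := hG.fderiv_right (by norm_num)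
  have h2 : HasFDerivAt (fderiv ℝ G) (fderiv ℝ (fderiv ℝ G) (c r₀)) (c r₀) :=
    (h1.differentiableAt one_ne_zero).hasFDerivAt
  have h3 : HasDerivAt (fun r => fderiv ℝ G (c r)) (fderiv ℝ (fderiv ℝ G) (c r₀) w) r₀ :=
    h2.comp_hasDerivAt r₀ (f := c) hc
  have h4 := h3.clm_apply (hasDerivAt_const r₀ v)
  simpa using h4

/-- Clairaut-type swap on an open set. -/
lemma hasDerivAt_swap {F : ℝ → ℝ → ℝ} {O : Set (ℝ × ℝ)} (hO : IsOpen O)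
    (hF : ContDiffOn ℝ 2 (fun p : ℝ × ℝ => F p.1 p.2) O) {x y : ℝ} (hxy : (x, y) ∈ O) :
    HasDerivAt (fun x' => deriv (fun y' => F x' y') y)
      (deriv (fun y' => deriv (fun x' => F x' y') x) y) x := by
  set G := fun p : ℝ × ℝ => F p.1 p.2 with hG
  have hGat : ∀ p ∈ O, ContDiffAt ℝ 2 G p := fun p hp => hF.contDiffAt (hO.mem_nhds hp)
  -- eventual membership along horizontal line
  have hevx : ∀ᶠ x' in nhds x, (x', y) ∈ O := by
    have : Continuous fun x' : ℝ => ((x', y) : ℝ × ℝ) := by fun_prop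
    exact this.continuousAt.preimage_mem_nhds (hO.mem_nhds hxy)
  have hevy : ∀ᶠ y' in nhds y, (x, y') ∈ O := by
    have : Continuous fun y' : ℝ => ((x, y') : ℝ × ℝ) := by fun_prop
    exact this.continuousAt.preimage_mem_nhds (hO.mem_nhds hxy)
  -- step C
  have hcx : HasDerivAt (fun x' : ℝ => ((x', y) : ℝ × ℝ)) (1, 0) x :=
    (hasDerivAt_id x).prodMk (hasDerivAt_const x y)
  have hcy : HasDerivAt (fun y' : ℝ => ((x, y') : ℝ × ℝ)) (0, 1) y :=
    (hasDerivAt_const y x).prodMk (hasDerivAt_id y)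
  have hC : HasDerivAt (fun x' => fderiv ℝ G (x', y) (0, 1))
      (fderiv ℝ (fderiv ℝ G) (x, y) (1, 0) (0, 1)) x :=
    hasDerivAt_fderiv_apply hcx (hGat _ hxy) (0, 1)
  have hD : HasDerivAt (fun y' => fderiv ℝ G (x, y') (1, 0))
      (fderiv ℝ (fderiv ℝ G) (x, y) (0, 1) (1, 0)) y :=
    hasDerivAt_fderiv_apply hcy (hGat _ hxy) (1, 0)
  have hsymm : fderiv ℝ (fderiv ℝ G) (x, y) (1, 0) (0, 1)
      = fderiv ℝ (fderiv ℝ G) (x, y) (0, 1) (1, 0) :=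
    ((hGat _ hxy).isSymmSndFDerivAt (by simp)) (1, 0) (0, 1)
  -- identify the inner functions eventually
  have hE : (fun x' => deriv (fun y' => F x' y') y) =ᶠ[nhds x]
      (fun x' => fderiv ℝ G (x', y) (0, 1)) := by
    filter_upwards [hevx] with x' hx'
    exact pd2_eq_fderiv (((hGat _ hx').differentiableAt two_ne_zero))
  have hE' : (fun y' => deriv (fun x' => F x' y') x) =ᶠ[nhds y]
      (fun y' => fderiv ℝ G (x, y') (1, 0)) := by
    filter_upwards [hevy] with y' hy'
    exact pd1_eq_fderiv (((hGat _ hy').differentiableAt two_ne_zero))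
  have hgoal : HasDerivAt (fun x' => deriv (fun y' => F x' y') y)
      (fderiv ℝ (fderiv ℝ G) (x, y) (1, 0) (0, 1)) x := hC.congr_of_eventuallyEq hE
  have : deriv (fun y' => deriv (fun x' => F x' y') x) y
      = fderiv ℝ (fderiv ℝ G) (x, y) (0, 1) (1, 0) := by
    rw [Filter.EventuallyEq.deriv_eq hE']
    exact hD.deriv
  rw [this, ← hsymm]
  exact hgoal

lemma pd1_pd2_comm {f : ℝ → ℝ → ℝ} (hf : ContDiff ℝ 2 (fun p : ℝ × ℝ => f p.1 p.2)) :
    pd1 (pd2 f) = pd2 (pd1 f) := by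
  funext s t
  have h := hasDerivAt_swap isOpen_univ (hf.contDiffOn) (mem_univ ((s, t) : ℝ × ℝ))
  simpa [pd1, pd2] using h.deriv

end Calc

section Infra

/-- Smoothness of a curried function. -/
def Sm (f : ℝ → ℝ → ℝ) : Prop := ∀ n : ℕ, ContDiff ℝ n (fun p : ℝ × ℝ => f p.1 p.2)

/-- Rapid decay on the closed half plane. -/
def Dec (f : ℝ → ℝ → ℝ) : Prop :=
  ∀ n : ℕ, ∃ C : ℝ, ∀ s t : ℝ, 0 ≤ t → |f s t| * (1 + |s| + t) ^ n ≤ C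

lemma one_add_pos {s t : ℝ} (ht : 0 ≤ t) : (0:ℝ) < 1 + |s| + t := by
  have := abs_nonneg s; linarith

lemma Dec.add {f g : ℝ → ℝ → ℝ} (hf : Dec f) (hg : Dec g) :
    Dec (fun s t => f s t + g s t) := by
  intro n
  obtain ⟨C1, h1⟩ := hf n; obtain ⟨C2, h2⟩ := hg n
  refine ⟨C1 + C2, fun s t ht => ?_⟩
  have hpos : (0:ℝ) < (1 + |s| + t) ^ n := pow_pos (one_add_pos ht) n
  have habs : |f s t + g s t| ≤ |f s t| + |g s t| := abs_add_le _ _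
  nlinarith [h1 s t ht, h2 s t ht]

lemma Dec.const_mul {f : ℝ → ℝ → ℝ} (hf : Dec f) (c : ℝ) :
    Dec (fun s t => c * f s t) := by
  intro n
  obtain ⟨C, h⟩ := hf n
  refine ⟨|c| * C, fun s t ht => ?_⟩
  have := h s t ht
  have hpos : (0:ℝ) < (1 + |s| + t) ^ n := pow_pos (one_add_pos ht) n
  calc |c * f s t| * (1 + |s| + t) ^ n = |c| * (|f s t| * (1 + |s| + t) ^ n) := by
        rw [abs_mul]; ring
    _ ≤ |c| * C := by
        apply mul_le_mul_of_nonneg_left this (abs_nonneg c)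

lemma Dec.mul {f g : ℝ → ℝ → ℝ} (hf : Dec f) (hg : Dec g) :
    Dec (fun s t => f s t * g s t) := by
  intro n
  obtain ⟨C1, h1⟩ := hf n; obtain ⟨C2, h2⟩ := hg 0
  refine ⟨C1 * C2, fun s t ht => ?_⟩
  have e1 := h1 s t ht
  have e2 := h2 s t ht
  simp only [pow_zero, mul_one] at e2
  have hpos : (0:ℝ) < (1 + |s| + t) ^ n := pow_pos (one_add_pos ht) n
  have h1' : (0:ℝ) ≤ C1 := le_trans (by positivity) e1
  calc |f s t * g s t| * (1 + |s| + t) ^ n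
      = (|f s t| * (1 + |s| + t) ^ n) * |g s t| := by rw [abs_mul]; ring
    _ ≤ C1 * C2 := by
        apply mul_le_mul e1 e2 (abs_nonneg _) h1'

lemma Dec.smul_s {f : ℝ → ℝ → ℝ} (hf : Dec f) :
    Dec (fun s t => s * f s t) := by
  intro n
  obtain ⟨C, h⟩ := hf (n + 1)
  refine ⟨C, fun s t ht => ?_⟩
  have := h s t ht
  have hb : (0:ℝ) < 1 + |s| + t := one_add_pos ht
  have hs : |s| ≤ 1 + |s| + t := by linarith [abs_nonneg s]
  calc |s * f s t| * (1 + |s| + t) ^ n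
      = |s| * (|f s t| * (1 + |s| + t) ^ n) := by rw [abs_mul]; ring
    _ ≤ (1 + |s| + t) * (|f s t| * (1 + |s| + t) ^ n) := by
        apply mul_le_mul_of_nonneg_right hs (by positivity)
    _ = |f s t| * (1 + |s| + t) ^ (n + 1) := by ring
    _ ≤ C := this

lemma Dec.smul_t {f : ℝ → ℝ → ℝ} (hf : Dec f) :
    Dec (fun s t => t * f s t) := by
  intro n
  obtain ⟨C, h⟩ := hf (n + 1)
  refine ⟨C, fun s t ht => ?_⟩
  have := h s t ht
  have hb : (0:ℝ) < 1 + |s| + t := one_add_pos ht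
  have hs : |t| ≤ 1 + |s| + t := by rw [abs_of_nonneg ht]; linarith [abs_nonneg s]
  calc |t * f s t| * (1 + |s| + t) ^ n
      = |t| * (|f s t| * (1 + |s| + t) ^ n) := by rw [abs_mul]; ring
    _ ≤ (1 + |s| + t) * (|f s t| * (1 + |s| + t) ^ n) := by
        apply mul_le_mul_of_nonneg_right hs (by positivity)
    _ = |f s t| * (1 + |s| + t) ^ (n + 1) := by ring
    _ ≤ C := this

lemma Dec.of_bound {f : ℝ → ℝ → ℝ} (hf : Dec f) {g : ℝ → ℝ → ℝ}
    (h : ∀ s t, 0 ≤ t → |g s t| ≤ |f s t|) : Dec g := by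
  intro n
  obtain ⟨C, hC⟩ := hf n
  exact ⟨C, fun s t ht => le_trans
    (mul_le_mul_of_nonneg_right (h s t ht) (by positivity)) (hC s t ht)⟩

/-- key inequality: `(1+s²)(1+t²) ≤ (1+|s|+t)⁴`. -/
lemma key_ineq {s t : ℝ} (ht : 0 ≤ t) : (1 + s^2) * (1 + t^2) ≤ (1 + |s| + t) ^ 4 := by
  have h1 : 1 + s^2 ≤ (1 + |s| + t) ^ 2 := by
    nlinarith [abs_nonneg s, sq_abs s]
  have h2 : 1 + t^2 ≤ (1 + |s| + t) ^ 2 := by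
    nlinarith [abs_nonneg s, sq_abs s]
  calc (1 + s^2) * (1 + t^2) ≤ (1 + |s| + t) ^ 2 * ((1 + |s| + t) ^ 2) := by
        apply mul_le_mul h1 h2 (by positivity) (by positivity)
    _ = (1 + |s| + t) ^ 4 := by ring

lemma Dec.bound_bnd {f : ℝ → ℝ → ℝ} (hf : Dec f) :
    ∃ C : ℝ, 0 ≤ C ∧ ∀ s t : ℝ, 0 ≤ t → |f s t| ≤ C * ((1 + s^2)⁻¹ * (1 + t^2)⁻¹) := by
  obtain ⟨C, hC⟩ := hf 4
  have hC0 : 0 ≤ C := le_trans (by positivity) (hC 0 0 le_rfl)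
  refine ⟨C, hC0, fun s t ht => ?_⟩
  have h4 : (0:ℝ) < (1 + |s| + t) ^ 4 := pow_pos (one_add_pos ht) 4
  have hst : (0:ℝ) < (1 + s^2) * (1 + t^2) := by positivity
  have h1 : |f s t| ≤ C / (1 + |s| + t) ^ 4 := by
    rw [le_div_iff₀ h4]; exact hC s t ht
  have h2 : C / (1 + |s| + t) ^ 4 ≤ C / ((1 + s^2) * (1 + t^2)) :=
    div_le_div_of_nonneg_left hC0 hst (key_ineq ht)
  calc |f s t| ≤ C / ((1 + s^2) * (1 + t^2)) := le_trans h1 h2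
    _ = C * ((1 + s^2)⁻¹ * (1 + t^2)⁻¹) := by rw [div_eq_mul_inv, mul_inv]

/-- The half-plane product measure. -/
def HP : Measure (ℝ × ℝ) := (volume : Measure ℝ).prod ((volume : Measure ℝ).restrict (Ioi 0))

instance : SigmaFinite ((volume : Measure ℝ).restrict (Ioi (0:ℝ))) := by infer_instance

lemma bnd_integrable : Integrable (fun p : ℝ × ℝ => (1 + p.1^2)⁻¹ * (1 + p.2^2)⁻¹) HP :=
  Integrable.mul_prod integrable_inv_one_add_sq integrable_inv_one_add_sq.restrict

lemma ae_snd_pos : ∀ᵐ p : ℝ × ℝ ∂HP, 0 < p.2 := by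
  have hset : {p : ℝ × ℝ | ¬ (0 < p.2)} = (univ : Set ℝ) ×ˢ (Iic (0:ℝ)) := by
    ext p; simp [not_lt]
  rw [ae_iff, hset]
  rw [HP, Measure.prod_prod]
  simp [Measure.restrict_apply, Iic_inter_Ioi]

lemma integrable_HP {f : ℝ → ℝ → ℝ} (hc : Continuous (fun p : ℝ × ℝ => f p.1 p.2))
    (hd : Dec f) : Integrable (fun p : ℝ × ℝ => f p.1 p.2) HP := by
  obtain ⟨C, hC0, hC⟩ := hd.bound_bnd
  apply (bnd_integrable.const_mul C).mono' hc.aestronglyMeasurable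
  filter_upwards [ae_snd_pos] with p hp
  simpa using hC p.1 p.2 hp.le

lemma intHalf_eq_HP {f : ℝ → ℝ → ℝ} (hf : Integrable (fun p : ℝ × ℝ => f p.1 p.2) HP) :
    intHalf f = ∫ p : ℝ × ℝ, f p.1 p.2 ∂HP := by
  rw [intHalf, HP]
  exact integral_integral hf

lemma intHalf_swap {f : ℝ → ℝ → ℝ} (hf : Integrable (fun p : ℝ × ℝ => f p.1 p.2) HP) :
    intHalf f = ∫ t in Ioi (0:ℝ), ∫ s : ℝ, f s t := by
  rw [intHalf]
  exact integral_integral_swap (by exact hf)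

lemma intHalf_congr {f g : ℝ → ℝ → ℝ} (h : ∀ s t, 0 ≤ t → f s t = g s t) :
    intHalf f = intHalf g := by
  unfold intHalf
  apply integral_congr_ae
  apply Filter.Eventually.of_forall
  intro s
  apply setIntegral_congr_fun measurableSet_Ioi
  intro t ht
  exact h s t (le_of_lt ht)

lemma intHalf_add {f g : ℝ → ℝ → ℝ}
    (hf : Integrable (fun p : ℝ × ℝ => f p.1 p.2) HP)
    (hg : Integrable (fun p : ℝ × ℝ => g p.1 p.2) HP) :
    intHalf (fun s t => f s t + g s t) = intHalf f + intHalf g := by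
  rw [intHalf_eq_HP (hf.add hg), intHalf_eq_HP hf, intHalf_eq_HP hg]
  exact integral_add hf hg

lemma intHalf_const_mul (c : ℝ) (f : ℝ → ℝ → ℝ) :
    intHalf (fun s t => c * f s t) = c * intHalf f := by
  unfold intHalf
  rw [← integral_const_mul]
  apply integral_congr_ae; apply Filter.Eventually.of_forall; intro s
  exact integral_const_mul c _

lemma intHalf_neg (f : ℝ → ℝ → ℝ) : intHalf (fun s t => - f s t) = - intHalf f := by
  have := intHalf_const_mul (-1) f
  simpa using this

end Infra
section SmLemmas

lemma Sm.cont {f : ℝ → ℝ → ℝ} (hf : Sm f) : Continuous (fun p : ℝ × ℝ => f p.1 p.2) :=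
  (hf 0).continuous

lemma Sm.diffAt {f : ℝ → ℝ → ℝ} (hf : Sm f) (s t : ℝ) :
    DifferentiableAt ℝ (fun p : ℝ × ℝ => f p.1 p.2) (s, t) :=
  ((hf 1).differentiable (by norm_num)).differentiableAt

lemma Sm.hd1 {f : ℝ → ℝ → ℝ} (hf : Sm f) (s t : ℝ) :
    HasDerivAt (fun x => f x t) (pd1 f s t) s :=
  (hasDerivAt_slice1 (hf.diffAt s t)).differentiableAt.hasDerivAt

lemma Sm.hd2 {f : ℝ → ℝ → ℝ} (hf : Sm f) (s t : ℝ) :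
    HasDerivAt (fun y => f s y) (pd2 f s t) t :=
  (hasDerivAt_slice2 (hf.diffAt s t)).differentiableAt.hasDerivAt

lemma Sm.p1 {f : ℝ → ℝ → ℝ} (hf : Sm f) : Sm (_root_.pd1 f) := by
  intro n
  have heq : (fun p : ℝ × ℝ => pd1 f p.1 p.2)
      = fun p : ℝ × ℝ => fderiv ℝ (fun q : ℝ × ℝ => f q.1 q.2) p (1, 0) := by
    funext p
    exact pd1_eq_fderiv (hf.diffAt p.1 p.2)
  rw [heq]
  have h1 : ContDiff ℝ n (fderiv ℝ (fun q : ℝ × ℝ => f q.1 q.2)) := by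
    apply (hf (n + 1)).fderiv_right
    norm_cast
  exact h1.clm_apply contDiff_const

lemma Sm.p2 {f : ℝ → ℝ → ℝ} (hf : Sm f) : Sm (_root_.pd2 f) := by
  intro n
  have heq : (fun p : ℝ × ℝ => pd2 f p.1 p.2)
      = fun p : ℝ × ℝ => fderiv ℝ (fun q : ℝ × ℝ => f q.1 q.2) p (0, 1) := by
    funext p
    exact pd2_eq_fderiv (hf.diffAt p.1 p.2)
  rw [heq]
  have h1 : ContDiff ℝ n (fderiv ℝ (fun q : ℝ × ℝ => f q.1 q.2)) := by
    apply (hf (n + 1)).fderiv_right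
    norm_cast
  exact h1.clm_apply contDiff_const

lemma Sm.add {f g : ℝ → ℝ → ℝ} (hf : Sm f) (hg : Sm g) :
    Sm (fun s t => f s t + g s t) := fun n => (hf n).add (hg n)

lemma Sm.mul {f g : ℝ → ℝ → ℝ} (hf : Sm f) (hg : Sm g) :
    Sm (fun s t => f s t * g s t) := fun n => (hf n).mul (hg n)

lemma Sm.const_mul {f : ℝ → ℝ → ℝ} (hf : Sm f) (c : ℝ) :
    Sm (fun s t => c * f s t) := fun n => contDiff_const.mul (hf n)

lemma Sm.neg {f : ℝ → ℝ → ℝ} (hf : Sm f) : Sm (fun s t => - f s t) := fun n => (hf n).neg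

lemma Sm.sub {f g : ℝ → ℝ → ℝ} (hf : Sm f) (hg : Sm g) :
    Sm (fun s t => f s t - g s t) := fun n => (hf n).sub (hg n)

lemma sm_coord1 : Sm (fun s _ : ℝ => s) := fun _ => contDiff_fst
lemma sm_coord2 : Sm (fun _ t : ℝ => t) := fun _ => contDiff_snd
lemma sm_const (c : ℝ) : Sm (fun _ _ => c) := fun _ => contDiff_const

lemma Sm.comm {f : ℝ → ℝ → ℝ} (hf : Sm f) : _root_.pd1 (_root_.pd2 f) = _root_.pd2 (_root_.pd1 f) :=
  pd1_pd2_comm (hf 2)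

-- pointwise derivative rules, as function-level identities
lemma pd1_addF {f g : ℝ → ℝ → ℝ} (hf : Sm f) (hg : Sm g) :
    pd1 (fun s t => f s t + g s t) = fun s t => pd1 f s t + pd1 g s t := by
  funext s t
  exact ((hf.hd1 s t).add (hg.hd1 s t)).deriv

lemma pd2_addF {f g : ℝ → ℝ → ℝ} (hf : Sm f) (hg : Sm g) :
    pd2 (fun s t => f s t + g s t) = fun s t => pd2 f s t + pd2 g s t := by
  funext s t
  exact ((hf.hd2 s t).add (hg.hd2 s t)).deriv

lemma pd1_mulF {f g : ℝ → ℝ → ℝ} (hf : Sm f) (hg : Sm g) :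
    pd1 (fun s t => f s t * g s t) = fun s t => pd1 f s t * g s t + f s t * pd1 g s t := by
  funext s t
  exact ((hf.hd1 s t).mul (hg.hd1 s t)).deriv

lemma pd2_mulF {f g : ℝ → ℝ → ℝ} (hf : Sm f) (hg : Sm g) :
    pd2 (fun s t => f s t * g s t) = fun s t => pd2 f s t * g s t + f s t * pd2 g s t := by
  funext s t
  exact ((hf.hd2 s t).mul (hg.hd2 s t)).deriv

lemma pd1_const_mulF {f : ℝ → ℝ → ℝ} (hf : Sm f) (c : ℝ) :
    pd1 (fun s t => c * f s t) = fun s t => c * pd1 f s t := by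
  funext s t
  exact ((hf.hd1 s t).const_mul c).deriv

lemma pd2_const_mulF {f : ℝ → ℝ → ℝ} (hf : Sm f) (c : ℝ) :
    pd2 (fun s t => c * f s t) = fun s t => c * pd2 f s t := by
  funext s t
  exact ((hf.hd2 s t).const_mul c).deriv

lemma pd1_coord1 : pd1 (fun s _ : ℝ => s) = fun _ _ => (1:ℝ) := by
  funext s t; simp [pd1]

lemma pd1_coord2 : pd1 (fun _ t : ℝ => t) = fun _ _ => (0:ℝ) := by
  funext s t; simp [pd1]

lemma pd2_coord1 : pd2 (fun s _ : ℝ => s) = fun _ _ => (0:ℝ) := by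
  funext s t; simp [pd2]

lemma pd2_coord2 : pd2 (fun _ t : ℝ => t) = fun _ _ => (1:ℝ) := by
  funext s t; simp [pd2]

lemma pd1_constF (c : ℝ) : pd1 (fun _ _ => c) = fun _ _ => (0:ℝ) := by
  funext s t; simp [pd1]

lemma pd2_constF (c : ℝ) : pd2 (fun _ _ => c) = fun _ _ => (0:ℝ) := by
  funext s t; simp [pd2]

-- multiplication by coordinates
lemma pd1_smul_sF {f : ℝ → ℝ → ℝ} (hf : Sm f) :
    pd1 (fun s t => s * f s t) = fun s t => f s t + s * pd1 f s t := by
  funext s t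
  have := ((hasDerivAt_id s).mul (hf.hd1 s t)).deriv
  simpa [pd1, Pi.mul_def] using this

lemma pd2_smul_sF {f : ℝ → ℝ → ℝ} (hf : Sm f) :
    pd2 (fun s t => s * f s t) = fun s t => s * pd2 f s t := by
  funext s t
  exact ((hf.hd2 s t).const_mul s).deriv

lemma pd1_smul_tF {f : ℝ → ℝ → ℝ} (hf : Sm f) :
    pd1 (fun s t => t * f s t) = fun s t => t * pd1 f s t := by
  funext s t
  exact ((hf.hd1 s t).const_mul t).deriv

lemma pd2_smul_tF {f : ℝ → ℝ → ℝ} (hf : Sm f) :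
    pd2 (fun s t => t * f s t) = fun s t => f s t + t * pd2 f s t := by
  funext s t
  have := ((hasDerivAt_id t).mul (hf.hd2 s t)).deriv
  simpa [pd2, Pi.mul_def] using this

end SmLemmas
section IBP

lemma integrable_fix_t {h : ℝ → ℝ → ℝ} (hc : Continuous (fun p : ℝ × ℝ => h p.1 p.2))
    (hd : Dec h) {t : ℝ} (ht : 0 ≤ t) : Integrable (fun s => h s t) := by
  obtain ⟨C, hC⟩ := hd 2
  have hC0 : 0 ≤ C := le_trans (by positivity) (hC 0 t ht)
  apply (integrable_inv_one_add_sq.const_mul C).mono'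
  · exact (hc.comp (continuous_id.prodMk continuous_const)).aestronglyMeasurable
  · apply Filter.Eventually.of_forall
    intro s
    have h2 : (1:ℝ) + s^2 ≤ (1 + |s| + t)^2 := by nlinarith [abs_nonneg s, sq_abs s]
    have hpos : (0:ℝ) < 1 + s^2 := by positivity
    have hpos2 : (0:ℝ) < (1 + |s| + t)^2 := by positivity
    rw [Real.norm_eq_abs]
    calc |h s t| ≤ C / (1 + |s| + t)^2 := by rw [le_div_iff₀ hpos2]; exact hC s t ht
      _ ≤ C / (1 + s^2) := div_le_div_of_nonneg_left hC0 hpos h2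
      _ = C * (1 + s^2)⁻¹ := by rw [div_eq_mul_inv]

lemma integrableOn_fix_s {h : ℝ → ℝ → ℝ} (hc : Continuous (fun p : ℝ × ℝ => h p.1 p.2))
    (hd : Dec h) (s : ℝ) : IntegrableOn (fun t => h s t) (Ioi 0) := by
  obtain ⟨C, hC⟩ := hd 2
  have hC0 : 0 ≤ C := le_trans (by positivity) (hC s 0 le_rfl)
  apply ((integrable_inv_one_add_sq.const_mul C).restrict (s := Ioi 0)).mono'
  · exact ((hc.comp (continuous_const.prodMk continuous_id)).aestronglyMeasurable).restrict
  · rw [ae_restrict_iff' measurableSet_Ioi]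
    apply Filter.Eventually.of_forall
    intro t htpos
    have ht : (0:ℝ) ≤ t := le_of_lt htpos
    have h2 : (1:ℝ) + t^2 ≤ (1 + |s| + t)^2 := by nlinarith [abs_nonneg s, sq_abs s]
    have hpos : (0:ℝ) < 1 + t^2 := by positivity
    have hpos2 : (0:ℝ) < (1 + |s| + t)^2 := by positivity
    rw [Real.norm_eq_abs]
    calc |h s t| ≤ C / (1 + |s| + t)^2 := by rw [le_div_iff₀ hpos2]; exact hC s t ht
      _ ≤ C / (1 + t^2) := div_le_div_of_nonneg_left hC0 hpos h2
      _ = C * (1 + t^2)⁻¹ := by rw [div_eq_mul_inv]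

lemma tendsto_fix_s {h : ℝ → ℝ → ℝ} (hd : Dec h) (s : ℝ) :
    Filter.Tendsto (fun t => h s t) Filter.atTop (nhds 0) := by
  obtain ⟨C, hC⟩ := hd 1
  have hC0 : 0 ≤ C := by
    have h0 := hC s 0 le_rfl
    have : (0:ℝ) ≤ |h s 0| * (1 + |s| + 0) ^ 1 := by positivity
    linarith
  apply squeeze_zero_norm' (a := fun t => C * (1 + t)⁻¹)
  · filter_upwards [Filter.eventually_ge_atTop (0:ℝ)] with t ht
    have h1 : (0:ℝ) < 1 + t := by linarith
    have h2 : (1:ℝ) + t ≤ 1 + |s| + t := by linarith [abs_nonneg s]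
    have hpos2 : (0:ℝ) < 1 + |s| + t := one_add_pos ht
    rw [Real.norm_eq_abs]
    calc |h s t| ≤ C / (1 + |s| + t) := by
          rw [le_div_iff₀ hpos2]; simpa using hC s t ht
      _ ≤ C / (1 + t) := div_le_div_of_nonneg_left hC0 h1 h2
      _ = C * (1 + t)⁻¹ := by rw [div_eq_mul_inv]
  · have : Filter.Tendsto (fun t : ℝ => (1 + t)⁻¹) Filter.atTop (nhds 0) := by
      apply tendsto_inv_atTop_zero.comp
      exact Filter.tendsto_atTop_add_const_left _ 1 Filter.tendsto_id
    simpa using this.const_mul C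

lemma ibp_s {f g : ℝ → ℝ → ℝ} (hsf : Sm f) (hsg : Sm g)
    (h1 : Dec (fun s t => pd1 f s t * g s t))
    (h2 : Dec (fun s t => f s t * pd1 g s t))
    (h3 : Dec (fun s t => f s t * g s t)) :
    intHalf (fun s t => f s t * pd1 g s t) = - intHalf (fun s t => pd1 f s t * g s t) := by
  have c1 : Continuous (fun p : ℝ × ℝ => pd1 f p.1 p.2 * g p.1 p.2) :=
    (hsf.p1.cont).mul hsg.cont
  have c2 : Continuous (fun p : ℝ × ℝ => f p.1 p.2 * pd1 g p.1 p.2) :=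
    hsf.cont.mul (hsg.p1.cont)
  have c3 : Continuous (fun p : ℝ × ℝ => f p.1 p.2 * g p.1 p.2) := hsf.cont.mul hsg.cont
  rw [intHalf_swap (integrable_HP c2 h2), intHalf_swap (integrable_HP c1 h1)]
  rw [← integral_neg]
  apply setIntegral_congr_fun measurableSet_Ioi
  intro t ht
  have ht0 : (0:ℝ) ≤ t := le_of_lt ht
  have := integral_mul_deriv_eq_deriv_mul_of_integrable
    (u := fun s => f s t) (v := fun s => g s t)
    (u' := fun s => pd1 f s t) (v' := fun s => pd1 g s t)
    (fun s _ => hsf.hd1 s t) (fun s _ => hsg.hd1 s t)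
    (integrable_fix_t c2 h2 ht0) (integrable_fix_t c1 h1 ht0)
    (integrable_fix_t c3 h3 ht0)
  simpa using this

lemma ibp_t {f g : ℝ → ℝ → ℝ} (hsf : Sm f) (hsg : Sm g)
    (h1 : Dec (fun s t => pd2 f s t * g s t))
    (h2 : Dec (fun s t => f s t * pd2 g s t))
    (h3 : Dec (fun s t => f s t * g s t))
    (hb : ∀ s, f s 0 * g s 0 = 0) :
    intHalf (fun s t => f s t * pd2 g s t) = - intHalf (fun s t => pd2 f s t * g s t) := by
  have c1 : Continuous (fun p : ℝ × ℝ => pd2 f p.1 p.2 * g p.1 p.2) :=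
    (hsf.p2.cont).mul hsg.cont
  have c2 : Continuous (fun p : ℝ × ℝ => f p.1 p.2 * pd2 g p.1 p.2) :=
    hsf.cont.mul (hsg.p2.cont)
  unfold intHalf
  rw [← integral_neg]
  apply integral_congr_ae
  apply Filter.Eventually.of_forall
  intro s
  have hzero : Filter.Tendsto ((fun t => f s t) * (fun t => g s t)) (nhdsWithin 0 (Ioi 0))
      (nhds 0) := by
    have hcont : Filter.Tendsto (fun t => f s t * g s t) (nhds 0) (nhds (f s 0 * g s 0)) := by
      apply ContinuousAt.tendsto
      have : Continuous (fun t => f s t * g s t) := by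
        have cf : Continuous (fun t => f s t) :=
          hsf.cont.comp (continuous_const.prodMk continuous_id)
        have cg : Continuous (fun t => g s t) :=
          hsg.cont.comp (continuous_const.prodMk continuous_id)
        exact cf.mul cg
      exact this.continuousAt
    rw [hb s] at hcont
    exact hcont.mono_left nhdsWithin_le_nhds
  have hinfty : Filter.Tendsto ((fun t => f s t) * (fun t => g s t)) Filter.atTop (nhds 0) :=
    tendsto_fix_s h3 s
  have := integral_Ioi_mul_deriv_eq_deriv_mul
    (u := fun t => f s t) (v := fun t => g s t)
    (u' := fun t => pd2 f s t) (v' := fun t => pd2 g s t)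
    (fun t _ => hsf.hd2 s t) (fun t _ => hsg.hd2 s t)
    (integrableOn_fix_s c2 h2 s) (integrableOn_fix_s c1 h1 s)
    hzero hinfty
  simpa using this

end IBP
section NiceGreen

def DVpot (θ : ℝ) : ℝ → ℝ → ℝ := fun s t => - t * Real.sin θ - s * Real.cos θ

lemma sm_V (θ : ℝ) : Sm (Vpot θ) := by
  intro n
  unfold Vpot
  exact (contDiff_snd.mul contDiff_const).sub (contDiff_fst.mul contDiff_const)

lemma sm_DV (θ : ℝ) : Sm (DVpot θ) := by
  intro n
  unfold DVpot
  exact ((contDiff_snd.neg).mul contDiff_const).sub (contDiff_fst.mul contDiff_const)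

lemma dec_V {θ : ℝ} {f : ℝ → ℝ → ℝ} (hf : Dec f) :
    Dec (fun s t => Vpot θ s t * f s t) := by
  have h : (fun s t => Vpot θ s t * f s t)
      = fun s t => Real.cos θ * (t * f s t) + (- Real.sin θ) * (s * f s t) := by
    funext s t; simp only [Vpot]; ring
  rw [h]
  exact (hf.smul_t.const_mul _).add (hf.smul_s.const_mul _)

lemma dec_DV {θ : ℝ} {f : ℝ → ℝ → ℝ} (hf : Dec f) :
    Dec (fun s t => DVpot θ s t * f s t) := by
  have h : (fun s t => DVpot θ s t * f s t)
      = fun s t => (- Real.sin θ) * (t * f s t) + (- Real.cos θ) * (s * f s t) := by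
    funext s t; simp only [DVpot]; ring
  rw [h]
  exact (hf.smul_t.const_mul _).add (hf.smul_s.const_mul _)

structure Nice (f : ℝ → ℝ → ℝ) : Prop where
  sm : Sm f
  d0 : Dec f
  d1 : Dec (pd1 f)
  d2 : Dec (pd2 f)
  d11 : Dec (pd1 (pd1 f))
  d22 : Dec (pd2 (pd2 f))

lemma Nice.add {f g : ℝ → ℝ → ℝ} (hf : Nice f) (hg : Nice g) :
    Nice (fun s t => f s t + g s t) where
  sm := hf.sm.add hg.sm
  d0 := hf.d0.add hg.d0
  d1 := by rw [pd1_addF hf.sm hg.sm]; exact hf.d1.add hg.d1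
  d2 := by rw [pd2_addF hf.sm hg.sm]; exact hf.d2.add hg.d2
  d11 := by
    rw [pd1_addF hf.sm hg.sm, pd1_addF hf.sm.p1 hg.sm.p1]
    exact hf.d11.add hg.d11
  d22 := by
    rw [pd2_addF hf.sm hg.sm, pd2_addF hf.sm.p2 hg.sm.p2]
    exact hf.d22.add hg.d22

lemma Nice.const_mul {f : ℝ → ℝ → ℝ} (hf : Nice f) (c : ℝ) :
    Nice (fun s t => c * f s t) where
  sm := hf.sm.const_mul c
  d0 := hf.d0.const_mul c
  d1 := by rw [pd1_const_mulF hf.sm]; exact hf.d1.const_mul c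
  d2 := by rw [pd2_const_mulF hf.sm]; exact hf.d2.const_mul c
  d11 := by
    rw [pd1_const_mulF hf.sm, pd1_const_mulF hf.sm.p1]
    exact hf.d11.const_mul c
  d22 := by
    rw [pd2_const_mulF hf.sm, pd2_const_mulF hf.sm.p2]
    exact hf.d22.const_mul c

lemma Nice.smul_s {f : ℝ → ℝ → ℝ} (hf : Nice f) :
    Nice (fun s t => s * f s t) where
  sm := sm_coord1.mul hf.sm
  d0 := hf.d0.smul_s
  d1 := by rw [pd1_smul_sF hf.sm]; exact hf.d0.add hf.d1.smul_s
  d2 := by rw [pd2_smul_sF hf.sm]; exact hf.d2.smul_s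
  d11 := by
    rw [pd1_smul_sF hf.sm, pd1_addF hf.sm (sm_coord1.mul hf.sm.p1),
      pd1_smul_sF hf.sm.p1]
    exact hf.d1.add (hf.d1.add hf.d11.smul_s)
  d22 := by
    rw [pd2_smul_sF hf.sm, pd2_smul_sF hf.sm.p2]
    exact hf.d22.smul_s

lemma Nice.smul_t {f : ℝ → ℝ → ℝ} (hf : Nice f) :
    Nice (fun s t => t * f s t) where
  sm := sm_coord2.mul hf.sm
  d0 := hf.d0.smul_t
  d1 := by rw [pd1_smul_tF hf.sm]; exact hf.d1.smul_t
  d2 := by rw [pd2_smul_tF hf.sm]; exact hf.d0.add hf.d2.smul_t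
  d11 := by
    rw [pd1_smul_tF hf.sm, pd1_smul_tF hf.sm.p1]
    exact hf.d11.smul_t
  d22 := by
    rw [pd2_smul_tF hf.sm, pd2_addF hf.sm (sm_coord2.mul hf.sm.p2),
      pd2_smul_tF hf.sm.p2]
    exact hf.d2.add (hf.d2.add hf.d22.smul_t)

lemma cont_V (θ : ℝ) : Continuous (fun p : ℝ × ℝ => Vpot θ p.1 p.2) := (sm_V θ).cont

/-- Green's identity for the operator `Hop θ`. -/
lemma green {θ : ℝ} {f g : ℝ → ℝ → ℝ} (hf : Nice f) (hg : Nice g)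
    (hNf : ∀ s, pd2 f s 0 = 0) (hNg : ∀ s, pd2 g s 0 = 0) :
    intHalf (fun s t => Hop θ f s t * g s t) = intHalf (fun s t => f s t * Hop θ g s t) := by
  have E1 : intHalf (fun s t => f s t * pd1 (pd1 g) s t)
      = intHalf (fun s t => pd1 (pd1 f) s t * g s t) := by
    have a1 := ibp_s (f := f) (g := pd1 g) hf.sm hg.sm.p1
      (hf.d1.mul hg.d1) (hf.d0.mul hg.d11) (hf.d0.mul hg.d1)
    have a2 := ibp_s (f := pd1 f) (g := g) hf.sm.p1 hg.sm
      (hf.d11.mul hg.d0) (hf.d1.mul hg.d1) (hf.d1.mul hg.d0)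
    rw [a1, a2, neg_neg]
  have E2 : intHalf (fun s t => f s t * pd2 (pd2 g) s t)
      = intHalf (fun s t => pd2 (pd2 f) s t * g s t) := by
    have a1 := ibp_t (f := f) (g := pd2 g) hf.sm hg.sm.p2
      (hf.d2.mul hg.d2) (hf.d0.mul hg.d22) (hf.d0.mul hg.d2)
      (fun s => by rw [hNg s, mul_zero])
    have a2 := ibp_t (f := pd2 f) (g := g) hf.sm.p2 hg.sm
      (hf.d22.mul hg.d0) (hf.d2.mul hg.d2) (hf.d2.mul hg.d0)
      (fun s => by rw [hNf s, zero_mul])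
    rw [a1, a2, neg_neg]
  -- integrabilities
  have i11fg : Integrable (fun p : ℝ × ℝ => pd1 (pd1 f) p.1 p.2 * g p.1 p.2) HP :=
    integrable_HP ((hf.sm.p1.p1.cont).mul hg.sm.cont) (hf.d11.mul hg.d0)
  have i22fg : Integrable (fun p : ℝ × ℝ => pd2 (pd2 f) p.1 p.2 * g p.1 p.2) HP :=
    integrable_HP ((hf.sm.p2.p2.cont).mul hg.sm.cont) (hf.d22.mul hg.d0)
  have if11g : Integrable (fun p : ℝ × ℝ => f p.1 p.2 * pd1 (pd1 g) p.1 p.2) HP :=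
    integrable_HP (hf.sm.cont.mul (hg.sm.p1.p1.cont)) (hf.d0.mul hg.d11)
  have if22g : Integrable (fun p : ℝ × ℝ => f p.1 p.2 * pd2 (pd2 g) p.1 p.2) HP :=
    integrable_HP (hf.sm.cont.mul (hg.sm.p2.p2.cont)) (hf.d0.mul hg.d22)
  have decV2 : Dec (fun s t => (Vpot θ s t)^2 * (f s t * g s t)) := by
    have h : (fun s t => (Vpot θ s t)^2 * (f s t * g s t))
        = fun s t => Vpot θ s t * (Vpot θ s t * (f s t * g s t)) := by
      funext s t; ring
    rw [h]; exact dec_V (dec_V (hf.d0.mul hg.d0))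
  have iV2 : Integrable (fun p : ℝ × ℝ => (Vpot θ p.1 p.2)^2 * (f p.1 p.2 * g p.1 p.2)) HP :=
    integrable_HP (((cont_V θ).pow 2).mul (hf.sm.cont.mul hg.sm.cont)) decV2
  have expandL : intHalf (fun s t => Hop θ f s t * g s t)
      = -(intHalf (fun s t => pd1 (pd1 f) s t * g s t))
        + (-(intHalf (fun s t => pd2 (pd2 f) s t * g s t))
          + intHalf (fun s t => (Vpot θ s t)^2 * (f s t * g s t))) := by
    rw [← intHalf_neg, ← intHalf_neg, ← intHalf_add i22fg.neg iV2,
      ← intHalf_add i11fg.neg (i22fg.neg.add iV2)]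
    apply intHalf_congr
    intro s t ht
    simp only [Hop]
    ring
  have expandR : intHalf (fun s t => f s t * Hop θ g s t)
      = -(intHalf (fun s t => f s t * pd1 (pd1 g) s t))
        + (-(intHalf (fun s t => f s t * pd2 (pd2 g) s t))
          + intHalf (fun s t => (Vpot θ s t)^2 * (f s t * g s t))) := by
    rw [← intHalf_neg, ← intHalf_neg, ← intHalf_add if22g.neg iV2,
      ← intHalf_add if11g.neg (if22g.neg.add iV2)]
    apply intHalf_congr
    intro s t ht
    simp only [Hop]
    ring
  rw [expandL, expandR, E1, E2]

/-- Pairing with an eigenfunction. -/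
lemma pair_eigen {θ σv : ℝ} {U g : ℝ → ℝ → ℝ} (hU : Nice U) (hNU : ∀ s, pd2 U s 0 = 0)
    (heig : ∀ s t : ℝ, 0 ≤ t → Hop θ U s t = σv * U s t)
    (hg : Nice g) (hNg : ∀ s, pd2 g s 0 = 0) :
    intHalf (fun s t => Hop θ g s t * U s t) = σv * intHalf (fun s t => g s t * U s t) := by
  rw [green hg hU hNg hNU]
  rw [← intHalf_const_mul]
  apply intHalf_congr
  intro s t ht
  rw [heig s t ht]
  ring

end NiceGreen
section Param

lemma inv4_le {s t : ℝ} (ht : 0 ≤ t) :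
    ((1 + |s| + t)^4)⁻¹ ≤ (1 + s^2)⁻¹ * (1 + t^2)⁻¹ := by
  rw [← mul_inv]
  exact inv_anti₀ (by positivity) (key_ineq ht)

lemma hasDerivAt_intHalf {f g : ℝ → ℝ → ℝ → ℝ} {θ ε C : ℝ} (hε : 0 < ε)
    (hint : ∀ x, |x - θ| < ε → Integrable (fun p : ℝ × ℝ => f x p.1 p.2) HP)
    (hgc : Continuous (fun p : ℝ × ℝ => g θ p.1 p.2))
    (hbound : ∀ x, |x - θ| < ε → ∀ s t : ℝ, 0 ≤ t → |g x s t| ≤ C * ((1 + |s| + t)^4)⁻¹)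
    (hderiv : ∀ x, |x - θ| < ε → ∀ s t : ℝ, 0 < t → HasDerivAt (fun y => f y s t) (g x s t) x) :
    HasDerivAt (fun x => intHalf (f x)) (intHalf (g θ)) θ := by
  have hθε : |θ - θ| < ε := by simpa using hε
  have hC0 : 0 ≤ C := by
    have h0 := hbound θ hθε 0 0 le_rfl
    have h1 : (0:ℝ) ≤ |g θ 0 0| := abs_nonneg _
    have h2 : ((1:ℝ) + |(0:ℝ)| + 0)^4 = 1 := by norm_num
    rw [h2] at h0
    simpa using le_trans h1 h0
  have hb2 : ∀ x, |x - θ| < ε → ∀ s t : ℝ, 0 ≤ t →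
      |g x s t| ≤ C * ((1 + s^2)⁻¹ * (1 + t^2)⁻¹) := by
    intro x hx s t ht
    refine le_trans (hbound x hx s t ht) ?_
    exact mul_le_mul_of_nonneg_left (inv4_le ht) hC0
  have hgint : Integrable (fun p : ℝ × ℝ => g θ p.1 p.2) HP := by
    apply (bnd_integrable.const_mul C).mono' hgc.aestronglyMeasurable
    filter_upwards [ae_snd_pos] with p hp
    simpa using hb2 θ hθε p.1 p.2 hp.le
  have key := hasDerivAt_integral_of_dominated_loc_of_deriv_le (μ := HP)
      (F := fun x (p : ℝ × ℝ) => f x p.1 p.2) (F' := fun x (p : ℝ × ℝ) => g x p.1 p.2)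
      (x₀ := θ) (s := Metric.ball θ ε) (bound := fun p => C * ((1 + p.1^2)⁻¹ * (1 + p.2^2)⁻¹)) (Metric.ball_mem_nhds θ hε)
      ?_ ?_ ?_ ?_ ?_ ?_
  · obtain ⟨-, hd⟩ := key
    have hev : (fun x => intHalf (f x)) =ᶠ[nhds θ] (fun x => ∫ p : ℝ × ℝ, f x p.1 p.2 ∂HP) := by
      filter_upwards [Metric.ball_mem_nhds θ hε] with x hx
      exact intHalf_eq_HP (hint x (by simpa [Real.dist_eq] using hx))
    rw [intHalf_eq_HP hgint]
    exact hd.congr_of_eventuallyEq hev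
  · filter_upwards [Metric.ball_mem_nhds θ hε] with x hx
    exact (hint x (by simpa [Real.dist_eq] using hx)).aestronglyMeasurable
  · exact hint θ hθε
  · exact hgc.aestronglyMeasurable
  · filter_upwards [ae_snd_pos] with p hp
    intro x hx
    rw [Real.norm_eq_abs]
    exact hb2 x (by simpa [Real.dist_eq] using hx) p.1 p.2 hp.le
  · exact bnd_integrable.const_mul C
  · filter_upwards [ae_snd_pos] with p hp
    intro x hx
    exact hderiv x (by simpa [Real.dist_eq] using hx) p.1 p.2 hp

end Param
section Schwartz

lemma rpow_bound_to_dec {f : ℝ → ℝ → ℝ} {C : ℝ} {n : ℕ}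
    (h : ∀ s t : ℝ, 0 ≤ t → |f s t| ≤ C * (1 + |s| + t) ^ (-(n:ℝ))) :
    ∀ s t : ℝ, 0 ≤ t → |f s t| * (1 + |s| + t) ^ n ≤ C := by
  intro s t ht
  have hb : (0:ℝ) < 1 + |s| + t := one_add_pos ht
  have hbn : (0:ℝ) < (1 + |s| + t) ^ n := pow_pos hb n
  have h1 := h s t ht
  rw [Real.rpow_neg hb.le, Real.rpow_natCast] at h1
  have h2 : |f s t| * (1 + |s| + t) ^ n ≤ (C * ((1 + |s| + t) ^ n)⁻¹) * (1 + |s| + t) ^ n :=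
    mul_le_mul_of_nonneg_right h1 hbn.le
  rwa [mul_assoc, inv_mul_cancel₀ (ne_of_gt hbn), mul_one] at h2

lemma schwartz_dec {u : ℝ → ℝ → ℝ} (hu : SchwartzHalf u) (k l : ℕ) :
    Dec (pd1^[k] (pd2^[l] u)) := by
  intro n
  obtain ⟨C, hC⟩ := hu k l n
  exact ⟨C, rpow_bound_to_dec hC⟩

end Schwartz
section Family

variable {a b : ℝ} {u : ℝ → ℝ → ℝ → ℝ} {σ : ℝ → ℝ} {x s t : ℝ}

lemma omega_open {a b : ℝ} : IsOpen (Set.Ioo a b ×ˢ (Set.univ : Set (ℝ × ℝ))) :=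
  isOpen_Ioo.prod isOpen_univ

lemma fam_diffAt (h : IsSmoothFamily a b u σ) (hx : x ∈ Set.Ioo a b) (s t : ℝ) :
    DifferentiableAt ℝ (fun p : ℝ × ℝ × ℝ => u p.1 p.2.1 p.2.2) (x, s, t) :=
  ((h.smooth 1).contDiffAt (omega_open.mem_nhds ⟨hx, mem_univ _⟩)).differentiableAt (by norm_num)

lemma curveθ (s t : ℝ) (x : ℝ) :
    HasDerivAt (fun y : ℝ => ((y, s, t) : ℝ × ℝ × ℝ)) ((1, 0, 0) : ℝ × ℝ × ℝ) x := by
  have := (hasDerivAt_id x).prodMk (hasDerivAt_const x ((s, t) : ℝ × ℝ))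
  exact this

lemma curve1 (x t : ℝ) (s : ℝ) :
    HasDerivAt (fun s' : ℝ => ((x, s', t) : ℝ × ℝ × ℝ)) ((0, 1, 0) : ℝ × ℝ × ℝ) s := by
  exact (hasDerivAt_const s x).prodMk ((hasDerivAt_id s).prodMk (hasDerivAt_const s t))

lemma curve2 (x s : ℝ) (t : ℝ) :
    HasDerivAt (fun t' : ℝ => ((x, s, t') : ℝ × ℝ × ℝ)) ((0, 0, 1) : ℝ × ℝ × ℝ) t := by
  exact (hasDerivAt_const t x).prodMk ((hasDerivAt_const t s).prodMk (hasDerivAt_id t))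

lemma hasDerivAt_uθ (h : IsSmoothFamily a b u σ) (hx : x ∈ Set.Ioo a b) (s t : ℝ) :
    HasDerivAt (fun y => u y s t) (pdθ u x s t) x :=
  (((fam_diffAt h hx s t).hasFDerivAt.comp_hasDerivAt x (f := fun y : ℝ => ((y, s, t) : ℝ × ℝ × ℝ)) (curveθ s t x))).differentiableAt.hasDerivAt

lemma pdθ_eq_fderiv (h : IsSmoothFamily a b u σ) (hx : x ∈ Set.Ioo a b) (s t : ℝ) :
    pdθ u x s t
      = fderiv ℝ (fun p : ℝ × ℝ × ℝ => u p.1 p.2.1 p.2.2) (x, s, t) ((1, 0, 0) : ℝ × ℝ × ℝ) :=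
  ((fam_diffAt h hx s t).hasFDerivAt.comp_hasDerivAt x (f := fun y : ℝ => ((y, s, t) : ℝ × ℝ × ℝ)) (curveθ s t x)).deriv

lemma pd1_fam_eq (h : IsSmoothFamily a b u σ) (hx : x ∈ Set.Ioo a b) (s t : ℝ) :
    pd1 (u x) s t
      = fderiv ℝ (fun p : ℝ × ℝ × ℝ => u p.1 p.2.1 p.2.2) (x, s, t) ((0, 1, 0) : ℝ × ℝ × ℝ) :=
  ((fam_diffAt h hx s t).hasFDerivAt.comp_hasDerivAt s (f := fun s' : ℝ => ((x, s', t) : ℝ × ℝ × ℝ)) (curve1 x t s)).deriv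

lemma pd2_fam_eq (h : IsSmoothFamily a b u σ) (hx : x ∈ Set.Ioo a b) (s t : ℝ) :
    pd2 (u x) s t
      = fderiv ℝ (fun p : ℝ × ℝ × ℝ => u p.1 p.2.1 p.2.2) (x, s, t) ((0, 0, 1) : ℝ × ℝ × ℝ) :=
  ((fam_diffAt h hx s t).hasFDerivAt.comp_hasDerivAt t (f := fun t' : ℝ => ((x, s, t') : ℝ × ℝ × ℝ)) (curve2 x s t)).deriv

lemma sm_fderiv_slice (h : IsSmoothFamily a b u σ) (v : ℝ × ℝ × ℝ) (n : ℕ) :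
    ContDiffOn ℝ n (fun z : ℝ × ℝ × ℝ => fderiv ℝ (fun p : ℝ × ℝ × ℝ => u p.1 p.2.1 p.2.2) z v)
      (Set.Ioo a b ×ˢ (Set.univ : Set (ℝ × ℝ))) := by
  have h1 : ContDiffOn ℝ n (fderiv ℝ (fun p : ℝ × ℝ × ℝ => u p.1 p.2.1 p.2.2))
      (Set.Ioo a b ×ˢ (Set.univ : Set (ℝ × ℝ))) :=
    (h.smooth (n + 1)).fderiv_of_isOpen omega_open (by norm_cast)
  exact h1.clm_apply contDiffOn_const

lemma sm_pdθ (h : IsSmoothFamily a b u σ) (hx : x ∈ Set.Ioo a b) : Sm (pdθ u x) := by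
  intro n
  have h1 := sm_fderiv_slice h ((1, 0, 0) : ℝ × ℝ × ℝ) n
  have hψ : ContDiff ℝ n (fun q : ℝ × ℝ => ((x, q.1, q.2) : ℝ × ℝ × ℝ)) :=
    contDiff_const.prodMk (contDiff_fst.prodMk contDiff_snd)
  have h2 : ContDiff ℝ n (fun q : ℝ × ℝ =>
      fderiv ℝ (fun p : ℝ × ℝ × ℝ => u p.1 p.2.1 p.2.2) (x, q.1, q.2) ((1, 0, 0) : ℝ × ℝ × ℝ)) := by
    rw [← contDiffOn_univ]
    exact h1.comp hψ.contDiffOn (fun q _ => ⟨hx, mem_univ _⟩)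
  have heq : (fun q : ℝ × ℝ => pdθ u x q.1 q.2) = fun q : ℝ × ℝ =>
      fderiv ℝ (fun p : ℝ × ℝ × ℝ => u p.1 p.2.1 p.2.2) (x, q.1, q.2) ((1, 0, 0) : ℝ × ℝ × ℝ) :=
    funext fun q => pdθ_eq_fderiv h hx q.1 q.2
  exact heq ▸ h2

lemma sm_slice_u (h : IsSmoothFamily a b u σ) (t : ℝ) :
    ContDiffOn ℝ 2 (fun q : ℝ × ℝ => u q.1 q.2 t) (Set.Ioo a b ×ˢ (Set.univ : Set ℝ)) := by
  have hψ : ContDiff ℝ 2 (fun q : ℝ × ℝ => ((q.1, q.2, t) : ℝ × ℝ × ℝ)) :=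
    contDiff_fst.prodMk (contDiff_snd.prodMk contDiff_const)
  exact (h.smooth 2).comp hψ.contDiffOn (fun q hq => ⟨hq.1, mem_univ _⟩)

lemma sm_slice_u2 (h : IsSmoothFamily a b u σ) (s : ℝ) :
    ContDiffOn ℝ 2 (fun q : ℝ × ℝ => u q.1 s q.2) (Set.Ioo a b ×ˢ (Set.univ : Set ℝ)) := by
  have hψ : ContDiff ℝ 2 (fun q : ℝ × ℝ => ((q.1, s, q.2) : ℝ × ℝ × ℝ)) :=
    contDiff_fst.prodMk (contDiff_const.prodMk contDiff_snd)
  exact (h.smooth 2).comp hψ.contDiffOn (fun q hq => ⟨hq.1, mem_univ _⟩)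

lemma sm_slice_pd1 (h : IsSmoothFamily a b u σ) (t : ℝ) :
    ContDiffOn ℝ 2 (fun q : ℝ × ℝ => pd1 (u q.1) q.2 t)
      (Set.Ioo a b ×ˢ (Set.univ : Set ℝ)) := by
  have hψ : ContDiff ℝ 2 (fun q : ℝ × ℝ => ((q.1, q.2, t) : ℝ × ℝ × ℝ)) :=
    contDiff_fst.prodMk (contDiff_snd.prodMk contDiff_const)
  have h2 : ContDiffOn ℝ 2 (fun q : ℝ × ℝ =>
      fderiv ℝ (fun p : ℝ × ℝ × ℝ => u p.1 p.2.1 p.2.2) (q.1, q.2, t) ((0, 1, 0) : ℝ × ℝ × ℝ))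
      (Set.Ioo a b ×ˢ (Set.univ : Set ℝ)) :=
    (sm_fderiv_slice h _ 2).comp hψ.contDiffOn (fun q hq => ⟨hq.1, mem_univ _⟩)
  exact h2.congr (fun q hq => pd1_fam_eq h hq.1 q.2 t)

lemma sm_slice_pd2 (h : IsSmoothFamily a b u σ) (s : ℝ) :
    ContDiffOn ℝ 2 (fun q : ℝ × ℝ => pd2 (u q.1) s q.2)
      (Set.Ioo a b ×ˢ (Set.univ : Set ℝ)) := by
  have hψ : ContDiff ℝ 2 (fun q : ℝ × ℝ => ((q.1, s, q.2) : ℝ × ℝ × ℝ)) :=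
    contDiff_fst.prodMk (contDiff_const.prodMk contDiff_snd)
  have h2 : ContDiffOn ℝ 2 (fun q : ℝ × ℝ =>
      fderiv ℝ (fun p : ℝ × ℝ × ℝ => u p.1 p.2.1 p.2.2) (q.1, s, q.2) ((0, 0, 1) : ℝ × ℝ × ℝ))
      (Set.Ioo a b ×ˢ (Set.univ : Set ℝ)) :=
    (sm_fderiv_slice h _ 2).comp hψ.contDiffOn (fun q hq => ⟨hq.1, mem_univ _⟩)
  exact h2.congr (fun q hq => pd2_fam_eq h hq.1 s q.2)

lemma swapC1 (h : IsSmoothFamily a b u σ) (hx : x ∈ Set.Ioo a b) (s t : ℝ) :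
    HasDerivAt (fun y => pd1 (u y) s t) (pd1 (pdθ u x) s t) x := by
  have := hasDerivAt_swap (F := fun y s' => u y s' t)
    ((isOpen_Ioo (a := a) (b := b)).prod isOpen_univ) (sm_slice_u h t) ⟨hx, mem_univ s⟩
  exact this

lemma swapC2 (h : IsSmoothFamily a b u σ) (hx : x ∈ Set.Ioo a b) (s t : ℝ) :
    HasDerivAt (fun y => pd2 (u y) s t) (pd2 (pdθ u x) s t) x := by
  have := hasDerivAt_swap (F := fun y t' => u y s t')
    ((isOpen_Ioo (a := a) (b := b)).prod isOpen_univ) (sm_slice_u2 h s) ⟨hx, mem_univ t⟩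
  exact this

lemma swapC11 (h : IsSmoothFamily a b u σ) (hx : x ∈ Set.Ioo a b) (s t : ℝ) :
    HasDerivAt (fun y => pd1 (pd1 (u y)) s t) (pd1 (pd1 (pdθ u x)) s t) x := by
  have hs := hasDerivAt_swap (F := fun y s' => pd1 (u y) s' t)
    ((isOpen_Ioo (a := a) (b := b)).prod isOpen_univ) (sm_slice_pd1 h t) ⟨hx, mem_univ s⟩
  have hinner : (fun s' => deriv (fun y => pd1 (u y) s' t) x) = fun s' => pd1 (pdθ u x) s' t :=
    funext fun s' => (swapC1 h hx s' t).deriv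
  rw [hinner] at hs
  exact hs

lemma swapC22 (h : IsSmoothFamily a b u σ) (hx : x ∈ Set.Ioo a b) (s t : ℝ) :
    HasDerivAt (fun y => pd2 (pd2 (u y)) s t) (pd2 (pd2 (pdθ u x)) s t) x := by
  have hs := hasDerivAt_swap (F := fun y t' => pd2 (u y) s t')
    ((isOpen_Ioo (a := a) (b := b)).prod isOpen_univ) (sm_slice_pd2 h s) ⟨hx, mem_univ t⟩
  have hinner : (fun t' => deriv (fun y => pd2 (u y) s t') x) = fun t' => pd2 (pdθ u x) s t' :=
    funext fun t' => (swapC2 h hx s t').deriv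
  rw [hinner] at hs
  exact hs

lemma neumann_W (h : IsSmoothFamily a b u σ) (hx : x ∈ Set.Ioo a b) :
    ∀ s, pd2 (pdθ u x) s 0 = 0 := by
  intro s
  have h2 := swapC2 h hx s 0
  have hzero : (fun y => pd2 (u y) s 0) =ᶠ[nhds x] (fun _ => (0:ℝ)) := by
    filter_upwards [isOpen_Ioo.mem_nhds hx] with y hy
    exact (h.eigen y hy).neumann s
  have h3 : HasDerivAt (fun _ : ℝ => (0:ℝ)) (pd2 (pdθ u x) s 0) x :=
    h2.congr_of_eventuallyEq hzero.symm
  exact h3.unique (hasDerivAt_const x 0)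

lemma hasDerivAt_sigma (h : IsSmoothFamily a b u σ) (hx : x ∈ Set.Ioo a b) :
    HasDerivAt σ (deriv σ x) x :=
  (((h.sigma_smooth 1).differentiableOn (by norm_num)).differentiableAt
    (isOpen_Ioo.mem_nhds hx)).hasDerivAt

lemma hasDerivAt_sigma' (h : IsSmoothFamily a b u σ) (hx : x ∈ Set.Ioo a b) :
    HasDerivAt (deriv σ) (deriv (deriv σ) x) x := by
  have h1 : ContDiffOn ℝ 1 (deriv σ) (Set.Ioo a b) :=
    (h.sigma_smooth 2).deriv_of_isOpen isOpen_Ioo (by norm_cast)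
  exact ((h1.differentiableOn (by norm_num)).differentiableAt (isOpen_Ioo.mem_nhds hx)).hasDerivAt

lemma hasDerivAt_Vθ (s t x : ℝ) : HasDerivAt (fun y => Vpot y s t) (DVpot x s t) x := by
  have h1 : HasDerivAt (fun y => t * Real.cos y - s * Real.sin y)
      (t * (-Real.sin x) - s * Real.cos x) x :=
    ((Real.hasDerivAt_cos x).const_mul t).sub ((Real.hasDerivAt_sin x).const_mul s)
  have : DVpot x s t = t * (-Real.sin x) - s * Real.cos x := by simp only [DVpot]; ring
  rw [this]
  exact h1

lemma hasDerivAt_V2θ (s t x : ℝ) :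
    HasDerivAt (fun y => (Vpot y s t)^2) (2 * Vpot x s t * DVpot x s t) x := by
  have : HasDerivAt (fun y => (Vpot y s t)^2) _ x := (hasDerivAt_Vθ s t x).pow 2
  convert this using 1
  push_cast
  ring

lemma hop_pdθ (h : IsSmoothFamily a b u σ) (hx : x ∈ Set.Ioo a b) :
    ∀ s t : ℝ, 0 ≤ t → Hop x (pdθ u x) s t
      = σ x * pdθ u x s t + deriv σ x * u x s t
        - 2 * Vpot x s t * DVpot x s t * u x s t := by
  intro s t ht
  have hU' := hasDerivAt_uθ h hx s t
  have hprod : HasDerivAt (fun y => (Vpot y s t)^2 * u y s t)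
      (2 * Vpot x s t * DVpot x s t * u x s t + (Vpot x s t)^2 * pdθ u x s t) x :=
    (hasDerivAt_V2θ s t x).mul hU'
  have hL : HasDerivAt (fun y => - pd1 (pd1 (u y)) s t - pd2 (pd2 (u y)) s t
        + (Vpot y s t)^2 * u y s t)
      (- pd1 (pd1 (pdθ u x)) s t - pd2 (pd2 (pdθ u x)) s t
        + (2 * Vpot x s t * DVpot x s t * u x s t + (Vpot x s t)^2 * pdθ u x s t)) x :=
    (((swapC11 h hx s t).neg).sub (swapC22 h hx s t)).add hprod
  have hR : HasDerivAt (fun y => σ y * u y s t)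
      (deriv σ x * u x s t + σ x * pdθ u x s t) x :=
    (hasDerivAt_sigma h hx).mul hU'
  have hev : (fun y => - pd1 (pd1 (u y)) s t - pd2 (pd2 (u y)) s t + (Vpot y s t)^2 * u y s t)
      =ᶠ[nhds x] (fun y => σ y * u y s t) := by
    filter_upwards [isOpen_Ioo.mem_nhds hx] with y hy
    have := (h.eigen y hy).eigen s t ht
    simpa [Hop] using this
  have heq := (hL.congr_of_eventuallyEq hev.symm).unique hR
  simp only [Hop]
  linarith [heq]

lemma dec_W (h : IsSmoothFamily a b u σ) (hx : x ∈ Set.Ioo a b) (k l : ℕ) :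
    Dec (pd1^[k] (pd2^[l] (pdθ u x))) := by
  intro n
  obtain ⟨ε, hε, C, hC⟩ := h.schwartz x hx 1 k l n
  refine ⟨C, ?_⟩
  apply rpow_bound_to_dec
  intro s t ht
  have := hC x hx (by simpa using hε) s t ht
  simpa using this

lemma nice_W (h : IsSmoothFamily a b u σ) (hx : x ∈ Set.Ioo a b) : Nice (pdθ u x) := by
  refine ⟨sm_pdθ h hx, ?_, ?_, ?_, ?_, ?_⟩
  · simpa using dec_W h hx 0 0
  · simpa using dec_W h hx 1 0
  · simpa using dec_W h hx 0 1
  · simpa using dec_W h hx 2 0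
  · simpa using dec_W h hx 0 2

lemma nice_U {θ σv : ℝ} {U : ℝ → ℝ → ℝ} (hU : IsModelEigen θ U σv) : Nice U := by
  refine ⟨hU.smooth, ?_, ?_, ?_, ?_, ?_⟩
  · simpa using schwartz_dec hU.schwartz 0 0
  · simpa using schwartz_dec hU.schwartz 1 0
  · simpa using schwartz_dec hU.schwartz 0 1
  · simpa using schwartz_dec hU.schwartz 2 0
  · simpa using schwartz_dec hU.schwartz 0 2

end Family
section Scaling

variable {θ σv : ℝ} {U : ℝ → ℝ → ℝ}

lemma hasDerivAt_Vs (θ t : ℝ) (s : ℝ) :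
    HasDerivAt (fun s' => Vpot θ s' t) (- Real.sin θ) s := by
  have h : HasDerivAt (fun s' : ℝ => t * Real.cos θ - s' * Real.sin θ)
      (0 - 1 * Real.sin θ) s :=
    (hasDerivAt_const s (t * Real.cos θ)).sub ((hasDerivAt_id s).mul_const (Real.sin θ))
  simpa [Vpot] using h

lemma hasDerivAt_Vt (θ s : ℝ) (t : ℝ) :
    HasDerivAt (fun t' => Vpot θ s t') (Real.cos θ) t := by
  have h : HasDerivAt (fun t' : ℝ => t' * Real.cos θ - s * Real.sin θ)
      (1 * Real.cos θ - 0) t :=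
    ((hasDerivAt_id t).mul_const (Real.cos θ)).sub (hasDerivAt_const t (s * Real.sin θ))
  simpa [Vpot] using h

lemma hop_scaling (hsm : Sm U)
    (heig : ∀ s t : ℝ, 0 ≤ t → Hop θ U s t = σv * U s t) (s t : ℝ) (ht : 0 ≤ t) :
    Hop θ (fun s' t' => s' * pd1 U s' t' + t' * pd2 U s' t') s t
      = σv * (s * pd1 U s t + t * pd2 U s t) + 2 * σv * U s t
        - 4 * (Vpot θ s t)^2 * U s t := by
  -- smoothness of components
  have sm1 : Sm (fun s' t' => s' * pd1 U s' t') := sm_coord1.mul hsm.p1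
  have sm2 : Sm (fun s' t' => t' * pd2 U s' t') := sm_coord2.mul hsm.p2
  -- first derivatives of A
  have eA1 : pd1 (fun s' t' => s' * pd1 U s' t' + t' * pd2 U s' t')
      = fun s' t' => (pd1 U s' t' + s' * pd1 (pd1 U) s' t') + t' * pd1 (pd2 U) s' t' := by
    rw [pd1_addF sm1 sm2, pd1_smul_sF hsm.p1, pd1_smul_tF hsm.p2]
  have eA2 : pd2 (fun s' t' => s' * pd1 U s' t' + t' * pd2 U s' t')
      = fun s' t' => s' * pd2 (pd1 U) s' t' + (pd2 U s' t' + t' * pd2 (pd2 U) s' t') := by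
    rw [pd2_addF sm1 sm2, pd2_smul_sF hsm.p1, pd2_smul_tF hsm.p2]
  -- second derivatives
  have smA1a : Sm (fun s' t' => pd1 U s' t' + s' * pd1 (pd1 U) s' t') :=
    hsm.p1.add (sm_coord1.mul hsm.p1.p1)
  have smA1b : Sm (fun s' t' => t' * pd1 (pd2 U) s' t') := sm_coord2.mul hsm.p2.p1
  have eA11 : pd1 (pd1 (fun s' t' => s' * pd1 U s' t' + t' * pd2 U s' t'))
      = fun s' t' => (pd1 (pd1 U) s' t' + (pd1 (pd1 U) s' t' + s' * pd1 (pd1 (pd1 U)) s' t'))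
          + t' * pd1 (pd1 (pd2 U)) s' t' := by
    rw [eA1, pd1_addF smA1a smA1b, pd1_addF hsm.p1 (sm_coord1.mul hsm.p1.p1),
      pd1_smul_sF hsm.p1.p1, pd1_smul_tF hsm.p2.p1]
  have smA2a : Sm (fun s' t' => s' * pd2 (pd1 U) s' t') := sm_coord1.mul hsm.p1.p2
  have smA2b : Sm (fun s' t' => pd2 U s' t' + t' * pd2 (pd2 U) s' t') :=
    hsm.p2.add (sm_coord2.mul hsm.p2.p2)
  have eA22 : pd2 (pd2 (fun s' t' => s' * pd1 U s' t' + t' * pd2 U s' t'))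
      = fun s' t' => s' * pd2 (pd2 (pd1 U)) s' t'
          + (pd2 (pd2 U) s' t' + (pd2 (pd2 U) s' t' + t' * pd2 (pd2 (pd2 U)) s' t')) := by
    rw [eA2, pd2_addF smA2a smA2b, pd2_smul_sF hsm.p1.p2,
      pd2_addF hsm.p2 (sm_coord2.mul hsm.p2.p2), pd2_smul_tF hsm.p2.p2]
  -- commutation reorderings
  have c1 : pd1 (pd1 (pd2 U)) = pd2 (pd1 (pd1 U)) := by
    rw [show pd1 (pd2 U) = pd2 (pd1 U) from hsm.comm]
    exact hsm.p1.comm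
  have c2 : pd2 (pd2 (pd1 U)) = pd1 (pd2 (pd2 U)) := by
    rw [show pd2 (pd1 U) = pd1 (pd2 U) from hsm.comm.symm]
    exact (hsm.p2.comm).symm
  -- the eigenvalue equation as a Laplacian identity
  have hΔ : ∀ s' t' : ℝ, 0 ≤ t' → pd1 (pd1 U) s' t' + pd2 (pd2 U) s' t'
      = (Vpot θ s' t')^2 * U s' t' - σv * U s' t' := by
    intro s' t' ht'
    have := heig s' t' ht'
    simp only [Hop] at this
    linarith
  -- s-derivative of the Laplacian identity
  have e1 : pd1 (pd1 (pd1 U)) s t + pd1 (pd2 (pd2 U)) s t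
      = (2 * Vpot θ s t ^ 1 * (- Real.sin θ)) * U s t
        + (Vpot θ s t)^2 * pd1 U s t - σv * pd1 U s t := by
    have hL : HasDerivAt (fun s' => pd1 (pd1 U) s' t + pd2 (pd2 U) s' t)
        (pd1 (pd1 (pd1 U)) s t + pd1 (pd2 (pd2 U)) s t) s :=
      (hsm.p1.p1.hd1 s t).add (hsm.p2.p2.hd1 s t)
    have hR : HasDerivAt (fun s' => (Vpot θ s' t)^2 * U s' t - σv * U s' t)
        (((2 : ℕ) * Vpot θ s t ^ (2 - 1) * (- Real.sin θ)) * U s t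
          + (Vpot θ s t)^2 * pd1 U s t - σv * pd1 U s t) s :=
      (((hasDerivAt_Vs θ t s).pow 2).mul (hsm.hd1 s t)).sub ((hsm.hd1 s t).const_mul σv)
    have hLR : HasDerivAt (fun s' => (Vpot θ s' t)^2 * U s' t - σv * U s' t)
        (pd1 (pd1 (pd1 U)) s t + pd1 (pd2 (pd2 U)) s t) s :=
      hL.congr_of_eventuallyEq (Filter.Eventually.of_forall (fun s' => (hΔ s' t ht).symm))
    have := hLR.unique hR
    rw [this]
    push_cast
    ring
  -- t-derivative (with t-weight to handle the boundary)
  have e2 : t * (pd2 (pd1 (pd1 U)) s t + pd2 (pd2 (pd2 U)) s t)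
      = t * ((2 * Vpot θ s t ^ 1 * Real.cos θ) * U s t
        + (Vpot θ s t)^2 * pd2 U s t - σv * pd2 U s t) := by
    rcases eq_or_lt_of_le ht with h0 | hpos
    · rw [← h0]; ring
    · congr 1
      have hL : HasDerivAt (fun t' => pd1 (pd1 U) s t' + pd2 (pd2 U) s t')
          (pd2 (pd1 (pd1 U)) s t + pd2 (pd2 (pd2 U)) s t) t :=
        (hsm.p1.p1.hd2 s t).add (hsm.p2.p2.hd2 s t)
      have hR : HasDerivAt (fun t' => (Vpot θ s t')^2 * U s t' - σv * U s t')
          (((2 : ℕ) * Vpot θ s t ^ (2 - 1) * Real.cos θ) * U s t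
            + (Vpot θ s t)^2 * pd2 U s t - σv * pd2 U s t) t :=
        (((hasDerivAt_Vt θ s t).pow 2).mul (hsm.hd2 s t)).sub ((hsm.hd2 s t).const_mul σv)
      have hev : (fun t' => pd1 (pd1 U) s t' + pd2 (pd2 U) s t')
          =ᶠ[nhds t] fun t' => (Vpot θ s t')^2 * U s t' - σv * U s t' := by
        filter_upwards [Ioi_mem_nhds hpos] with t' ht'
        exact hΔ s t' (le_of_lt ht')
      have hLR : HasDerivAt (fun t' => (Vpot θ s t')^2 * U s t' - σv * U s t')
          (pd2 (pd1 (pd1 U)) s t + pd2 (pd2 (pd2 U)) s t) t :=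
        hL.congr_of_eventuallyEq hev.symm
      have := hLR.unique hR
      rw [this]
      push_cast
      ring
  have eΔ := hΔ s t ht
  simp only [Hop, eA11, eA22]
  rw [c1, c2]
  simp only [Vpot] at eΔ e1 e2 ⊢
  linear_combination (-2 : ℝ) * eΔ - s * e1 - e2

end Scaling
section ScalingIBP

lemma intHalf_lc2 {f1 f2 : ℝ → ℝ → ℝ} (c1 c2 : ℝ)
    (h1 : Integrable (fun p : ℝ × ℝ => f1 p.1 p.2) HP)
    (h2 : Integrable (fun p : ℝ × ℝ => f2 p.1 p.2) HP) :
    intHalf (fun s t => c1 * f1 s t + c2 * f2 s t)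
      = c1 * intHalf f1 + c2 * intHalf f2 := by
  have ha : intHalf (fun s t => c1 * f1 s t + c2 * f2 s t)
      = intHalf (fun s t => c1 * f1 s t) + intHalf (fun s t => c2 * f2 s t) :=
    intHalf_add (h1.const_mul c1) (h2.const_mul c2)
  rw [ha, intHalf_const_mul, intHalf_const_mul]

lemma intHalf_lc3 {f1 f2 f3 : ℝ → ℝ → ℝ} (c1 c2 c3 : ℝ)
    (h1 : Integrable (fun p : ℝ × ℝ => f1 p.1 p.2) HP)
    (h2 : Integrable (fun p : ℝ × ℝ => f2 p.1 p.2) HP)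
    (h3 : Integrable (fun p : ℝ × ℝ => f3 p.1 p.2) HP) :
    intHalf (fun s t => c1 * f1 s t + c2 * f2 s t + c3 * f3 s t)
      = c1 * intHalf f1 + c2 * intHalf f2 + c3 * intHalf f3 := by
  have ha : intHalf (fun s t => c1 * f1 s t + c2 * f2 s t + c3 * f3 s t)
      = intHalf (fun s t => c1 * f1 s t + c2 * f2 s t) + intHalf (fun s t => c3 * f3 s t) :=
    intHalf_add ((h1.const_mul c1).add (h2.const_mul c2)) (h3.const_mul c3)
  rw [ha, intHalf_lc2 c1 c2 h1 h2, intHalf_const_mul]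

/-- Scaling integration by parts. -/
lemma scaling_ibp {U p : ℝ → ℝ → ℝ} (hsmU : Sm U) (hsmp : Sm p)
    (hdU : Dec U) (hd1U : Dec (pd1 U)) (hd2U : Dec (pd2 U))
    (hpd : ∀ f : ℝ → ℝ → ℝ, Dec f → Dec (fun s t => p s t * f s t))
    (hq1 : ∀ f : ℝ → ℝ → ℝ, Dec f → Dec (fun s t => pd1 p s t * f s t))
    (hq2 : ∀ f : ℝ → ℝ → ℝ, Dec f → Dec (fun s t => pd2 p s t * f s t)) :
    2 * intHalf (fun s t => p s t * U s t * (s * pd1 U s t + t * pd2 U s t))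
      = - intHalf (fun s t =>
          (2 * p s t + (s * pd1 p s t + t * pd2 p s t)) * (U s t * U s t)) := by
  have smPU : Sm (fun s t => p s t * U s t) := hsmp.mul hsmU
  have decPU : Dec (fun s t => p s t * U s t) := hpd U hdU
  have decUU : Dec (fun s t => U s t * U s t) := hdU.mul hdU
  -- continuity shortcuts
  have cU := hsmU.cont
  have cp := hsmp.cont
  have cp1U := hsmU.p1.cont
  have cp2U := hsmU.p2.cont
  -- integrable atoms
  have iJ1 : Integrable (fun q : ℝ × ℝ => p q.1 q.2 * (U q.1 q.2 * U q.1 q.2)) HP :=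
    integrable_HP (cp.mul (cU.mul cU)) (hpd _ decUU)
  have iJ2 : Integrable (fun q : ℝ × ℝ => q.1 * (pd1 p q.1 q.2 * (U q.1 q.2 * U q.1 q.2))) HP :=
    integrable_HP (f := fun s t => s * (pd1 p s t * (U s t * U s t)))
      (continuous_fst.mul ((hsmp.p1.cont).mul (cU.mul cU)))
      ((hq1 _ decUU).smul_s)
  have iJ3 : Integrable (fun q : ℝ × ℝ => q.2 * (pd2 p q.1 q.2 * (U q.1 q.2 * U q.1 q.2))) HP :=
    integrable_HP (f := fun s t => t * (pd2 p s t * (U s t * U s t)))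
      (continuous_snd.mul ((hsmp.p2.cont).mul (cU.mul cU)))
      ((hq2 _ decUU).smul_t)
  have iX : Integrable (fun q : ℝ × ℝ =>
      q.1 * (p q.1 q.2 * U q.1 q.2) * pd1 U q.1 q.2) HP :=
    integrable_HP (f := fun s t => s * (p s t * U s t) * pd1 U s t)
      ((continuous_fst.mul (cp.mul cU)).mul cp1U) ((decPU.smul_s).mul hd1U)
  have iY : Integrable (fun q : ℝ × ℝ =>
      q.2 * (p q.1 q.2 * U q.1 q.2) * pd2 U q.1 q.2) HP :=
    integrable_HP (f := fun s t => t * (p s t * U s t) * pd2 U s t)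
      ((continuous_snd.mul (cp.mul cU)).mul cp2U) ((decPU.smul_t).mul hd2U)
  -- X identity
  have eX : pd1 (fun s t => s * (p s t * U s t))
      = fun s t => p s t * U s t + s * (pd1 p s t * U s t + p s t * pd1 U s t) := by
    rw [pd1_smul_sF smPU, pd1_mulF hsmp hsmU]
  have hbX := ibp_s (f := fun s t => s * (p s t * U s t)) (g := U)
    (sm_coord1.mul smPU) hsmU
    (by simp only [eX]
        exact (decPU.add (((hq1 U hdU).add (hpd _ hd1U)).smul_s)).mul hdU)
    ((decPU.smul_s).mul hd1U) ((decPU.smul_s).mul hdU)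
  have hXsplit : intHalf (fun s t => pd1 (fun s' t' => s' * (p s' t' * U s' t')) s t * U s t)
      = intHalf (fun s t => p s t * (U s t * U s t))
        + intHalf (fun s t => s * (pd1 p s t * (U s t * U s t)))
        + intHalf (fun s t => s * (p s t * U s t) * pd1 U s t) := by
    have hcg : intHalf (fun s t => pd1 (fun s' t' => s' * (p s' t' * U s' t')) s t * U s t)
        = intHalf (fun s t => 1 * (p s t * (U s t * U s t))
            + 1 * (s * (pd1 p s t * (U s t * U s t)))
            + 1 * (s * (p s t * U s t) * pd1 U s t)) := by
      apply intHalf_congr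
      intro s t ht
      simp only [eX]
      ring
    rw [hcg, intHalf_lc3 1 1 1 iJ1 iJ2 iX]
    ring
  -- Y identity
  have eY : pd2 (fun s t => t * (p s t * U s t))
      = fun s t => p s t * U s t + t * (pd2 p s t * U s t + p s t * pd2 U s t) := by
    rw [pd2_smul_tF smPU, pd2_mulF hsmp hsmU]
  have hbY := ibp_t (f := fun s t => t * (p s t * U s t)) (g := U)
    (sm_coord2.mul smPU) hsmU
    (by simp only [eY]
        exact (decPU.add (((hq2 U hdU).add (hpd _ hd2U)).smul_t)).mul hdU)
    ((decPU.smul_t).mul hd2U) ((decPU.smul_t).mul hdU)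
    (fun s => by simp)
  have hYsplit : intHalf (fun s t => pd2 (fun s' t' => t' * (p s' t' * U s' t')) s t * U s t)
      = intHalf (fun s t => p s t * (U s t * U s t))
        + intHalf (fun s t => t * (pd2 p s t * (U s t * U s t)))
        + intHalf (fun s t => t * (p s t * U s t) * pd2 U s t) := by
    have hcg : intHalf (fun s t => pd2 (fun s' t' => t' * (p s' t' * U s' t')) s t * U s t)
        = intHalf (fun s t => 1 * (p s t * (U s t * U s t))
            + 1 * (t * (pd2 p s t * (U s t * U s t)))
            + 1 * (t * (p s t * U s t) * pd2 U s t)) := by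
      apply intHalf_congr
      intro s t ht
      simp only [eY]
      ring
    rw [hcg, intHalf_lc3 1 1 1 iJ1 iJ3 iY]
    ring
  -- assemble LHS
  have hLHS : intHalf (fun s t => p s t * U s t * (s * pd1 U s t + t * pd2 U s t))
      = intHalf (fun s t => s * (p s t * U s t) * pd1 U s t)
        + intHalf (fun s t => t * (p s t * U s t) * pd2 U s t) := by
    have hcg : intHalf (fun s t => p s t * U s t * (s * pd1 U s t + t * pd2 U s t))
        = intHalf (fun s t => 1 * (s * (p s t * U s t) * pd1 U s t)
            + 1 * (t * (p s t * U s t) * pd2 U s t)) := by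
      apply intHalf_congr
      intro s t ht
      ring
    rw [hcg, intHalf_lc2 1 1 iX iY]
    ring
  -- assemble RHS
  have hRHS : intHalf (fun s t =>
        (2 * p s t + (s * pd1 p s t + t * pd2 p s t)) * (U s t * U s t))
      = 2 * intHalf (fun s t => p s t * (U s t * U s t))
        + intHalf (fun s t => s * (pd1 p s t * (U s t * U s t)))
        + intHalf (fun s t => t * (pd2 p s t * (U s t * U s t))) := by
    have hcg : intHalf (fun s t =>
          (2 * p s t + (s * pd1 p s t + t * pd2 p s t)) * (U s t * U s t))
        = intHalf (fun s t => 2 * (p s t * (U s t * U s t))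
            + 1 * (s * (pd1 p s t * (U s t * U s t)))
            + 1 * (t * (pd2 p s t * (U s t * U s t)))) := by
      apply intHalf_congr
      intro s t ht
      ring
    rw [hcg, intHalf_lc3 2 1 1 iJ1 iJ2 iJ3]
    ring
  -- conclude
  rw [hLHS, hRHS]
  have e1 : intHalf (fun s t => s * (p s t * U s t) * pd1 U s t)
      = - (intHalf (fun s t => p s t * (U s t * U s t))
          + intHalf (fun s t => s * (pd1 p s t * (U s t * U s t)))
          + intHalf (fun s t => s * (p s t * U s t) * pd1 U s t)) := by
    rw [← hXsplit]
    exact hbX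
  have e2 : intHalf (fun s t => t * (p s t * U s t) * pd2 U s t)
      = - (intHalf (fun s t => p s t * (U s t * U s t))
          + intHalf (fun s t => t * (pd2 p s t * (U s t * U s t)))
          + intHalf (fun s t => t * (p s t * U s t) * pd2 U s t)) := by
    rw [← hYsplit]
    exact hbY
  linarith [e1, e2]

end ScalingIBP
section Helpers

lemma Dec.of_eq {f g : ℝ → ℝ → ℝ} (hf : Dec f) (h : ∀ s t : ℝ, 0 ≤ t → g s t = f s t) :
    Dec g :=
  hf.of_bound (fun s t ht => le_of_eq (congrArg abs (h s t ht)))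

lemma pd1_V (θ : ℝ) : pd1 (Vpot θ) = fun _ _ => -Real.sin θ := by
  funext s t
  exact (hasDerivAt_Vs θ t s).deriv

lemma pd2_V (θ : ℝ) : pd2 (Vpot θ) = fun _ _ => Real.cos θ := by
  funext s t
  exact (hasDerivAt_Vt θ s t).deriv

lemma hasDerivAt_DVs (θ t : ℝ) (s : ℝ) :
    HasDerivAt (fun s' => DVpot θ s' t) (- Real.cos θ) s := by
  have h : HasDerivAt (fun s' : ℝ => -t * Real.sin θ - s' * Real.cos θ)
      (0 - 1 * Real.cos θ) s :=
    (hasDerivAt_const s (-t * Real.sin θ)).sub ((hasDerivAt_id s).mul_const (Real.cos θ))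
  simpa [DVpot] using h

lemma hasDerivAt_DVt (θ s : ℝ) (t : ℝ) :
    HasDerivAt (fun t' => DVpot θ s t') (- Real.sin θ) t := by
  have h : HasDerivAt (fun t' : ℝ => -(t' * Real.sin θ) - s * Real.cos θ)
      (-(1 * Real.sin θ) - 0) t :=
    (((hasDerivAt_id t).mul_const (Real.sin θ)).neg).sub (hasDerivAt_const t (s * Real.cos θ))
  have he : (fun t' : ℝ => -(t' * Real.sin θ) - s * Real.cos θ)
      = fun t' => DVpot θ s t' := by
    funext t'; simp only [DVpot]; ring
  rw [he] at h
  simpa using h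

lemma pd1_DV (θ : ℝ) : pd1 (DVpot θ) = fun _ _ => -Real.cos θ := by
  funext s t
  exact (hasDerivAt_DVs θ t s).deriv

lemma pd2_DV (θ : ℝ) : pd2 (DVpot θ) = fun _ _ => -Real.sin θ := by
  funext s t
  exact (hasDerivAt_DVt θ s t).deriv

lemma hasDerivAt_DVθ (s t x : ℝ) :
    HasDerivAt (fun y => DVpot y s t) (- Vpot x s t) x := by
  have h1 : HasDerivAt (fun y => -t * Real.sin y - s * Real.cos y)
      (-t * Real.cos x - s * (-Real.sin x)) x := by
    have ha : HasDerivAt (fun y => -t * Real.sin y) (-t * Real.cos x) x :=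
      (Real.hasDerivAt_sin x).const_mul (-t)
    have hb : HasDerivAt (fun y => s * Real.cos y) (s * (-Real.sin x)) x :=
      (Real.hasDerivAt_cos x).const_mul s
    exact ha.sub hb
  have he : (fun y => -t * Real.sin y - s * Real.cos y) = fun y => DVpot y s t := rfl
  rw [he] at h1
  have : - Vpot x s t = -t * Real.cos x - s * (-Real.sin x) := by
    simp only [Vpot]; ring
  rw [this]
  exact h1

lemma absV_le {x s t : ℝ} (ht : 0 ≤ t) : |Vpot x s t| ≤ 1 + |s| + t := by
  simp only [Vpot]
  calc |t * Real.cos x - s * Real.sin x| ≤ |t * Real.cos x| + |s * Real.sin x| :=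
        abs_sub _ _
    _ = |t| * |Real.cos x| + |s| * |Real.sin x| := by rw [abs_mul, abs_mul]
    _ ≤ |t| * 1 + |s| * 1 := by
        gcongr
        · exact Real.abs_cos_le_one x
        · exact Real.abs_sin_le_one x
    _ ≤ 1 + |s| + t := by rw [abs_of_nonneg ht]; linarith [abs_nonneg s]

lemma absDV_le {x s t : ℝ} (ht : 0 ≤ t) : |DVpot x s t| ≤ 1 + |s| + t := by
  simp only [DVpot]
  calc |-t * Real.sin x - s * Real.cos x| ≤ |-t * Real.sin x| + |s * Real.cos x| :=
        abs_sub _ _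
    _ = |t| * |Real.sin x| + |s| * |Real.cos x| := by
        rw [abs_mul, abs_mul, abs_neg]
    _ ≤ |t| * 1 + |s| * 1 := by
        gcongr
        · exact Real.abs_sin_le_one x
        · exact Real.abs_cos_le_one x
    _ ≤ 1 + |s| + t := by rw [abs_of_nonneg ht]; linarith [abs_nonneg s]

lemma atom_bound {X C f1 f2 c1 c2 : ℝ} (hX : 1 ≤ X) (hC : 0 ≤ C)
    (h1 : |f1| ≤ C * (X^6)⁻¹) (h2 : |f2| ≤ C * (X^6)⁻¹)
    (hc1 : |c1| ≤ X) (hc2 : |c2| ≤ X) :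
    |c1 * c2 * (f1 * f2)| ≤ C^2 * ((X^4)⁻¹) := by
  have hX0 : (0:ℝ) < X := lt_of_lt_of_le one_pos hX
  have e1 : |c1 * c2 * (f1 * f2)| = |c1| * |c2| * (|f1| * |f2|) := by
    rw [abs_mul, abs_mul, abs_mul]
  have h12 : |f1| * |f2| ≤ (C * (X^6)⁻¹) * (C * (X^6)⁻¹) :=
    mul_le_mul h1 h2 (abs_nonneg _) (by positivity)
  have hcc : |c1| * |c2| ≤ X * X :=
    mul_le_mul hc1 hc2 (abs_nonneg _) hX0.le
  have h3 : |c1| * |c2| * (|f1| * |f2|) ≤ X * X * ((C * (X^6)⁻¹) * (C * (X^6)⁻¹)) :=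
    mul_le_mul hcc h12 (by positivity) (by positivity)
  have h4 : X * X * ((C * (X^6)⁻¹) * (C * (X^6)⁻¹)) = C^2 * (X^10)⁻¹ := by
    field_simp
  have h5 : (X^10)⁻¹ ≤ (X^4)⁻¹ := by
    apply inv_anti₀ (by positivity)
    calc X^4 = X^4 * 1 := by ring
      _ ≤ X^4 * X^6 := by
          apply mul_le_mul_of_nonneg_left (one_le_pow₀ hX) (by positivity)
      _ = X^10 := by ring
  calc |c1 * c2 * (f1 * f2)| = |c1| * |c2| * (|f1| * |f2|) := e1
    _ ≤ C^2 * (X^10)⁻¹ := by rw [← h4]; exact h3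
    _ ≤ C^2 * (X^4)⁻¹ := mul_le_mul_of_nonneg_left h5 (by positivity)

lemma fam_bound {a b : ℝ} {u : ℝ → ℝ → ℝ → ℝ} {σ : ℝ → ℝ} {θ : ℝ}
    (h : IsSmoothFamily a b u σ) (hθ : θ ∈ Set.Ioo a b) (m n : ℕ) :
    ∃ ε > 0, ∃ C : ℝ, 0 ≤ C ∧ ∀ x ∈ Set.Ioo a b, |x - θ| < ε → ∀ s t : ℝ, 0 ≤ t →
      |pdθ^[m] u x s t| ≤ C * ((1 + |s| + t)^n)⁻¹ := by
  obtain ⟨ε, hε, C, hC⟩ := h.schwartz θ hθ m 0 0 n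
  refine ⟨ε, hε, max C 0, le_max_right _ _, ?_⟩
  intro x hx hxε s t ht
  have h1 := hC x hx hxε s t ht
  simp only [Function.iterate_zero, id_eq] at h1
  rw [Real.rpow_neg (one_add_pos ht).le, Real.rpow_natCast] at h1
  calc |pdθ^[m] u x s t| ≤ C * ((1 + |s| + t)^n)⁻¹ := h1
    _ ≤ max C 0 * ((1 + |s| + t)^n)⁻¹ :=
        mul_le_mul_of_nonneg_right (le_max_left _ _) (by positivity)

end Helpers
section PerX

lemma nice_p1 {U : ℝ → ℝ → ℝ} (hsm : Sm U) (hs : SchwartzHalf U) : Nice (pd1 U) := by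
  refine ⟨hsm.p1, ?_, ?_, ?_, ?_, ?_⟩
  · simpa using schwartz_dec hs 1 0
  · simpa using schwartz_dec hs 2 0
  · rw [← hsm.comm]; simpa using schwartz_dec hs 1 1
  · simpa using schwartz_dec hs 3 0
  · have e : pd2 (pd2 (pd1 U)) = pd1 (pd2 (pd2 U)) := by
      rw [← hsm.comm, ← hsm.p2.comm]
    rw [e]; simpa using schwartz_dec hs 1 2

lemma nice_p2 {U : ℝ → ℝ → ℝ} (hsm : Sm U) (hs : SchwartzHalf U) : Nice (pd2 U) := by
  refine ⟨hsm.p2, ?_, ?_, ?_, ?_, ?_⟩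
  · simpa using schwartz_dec hs 0 1
  · simpa using schwartz_dec hs 1 1
  · simpa using schwartz_dec hs 0 2
  · simpa using schwartz_dec hs 2 1
  · simpa using schwartz_dec hs 0 3

lemma nice_AU {U : ℝ → ℝ → ℝ} (hsm : Sm U) (hs : SchwartzHalf U) :
    Nice (fun s t => s * pd1 U s t + t * pd2 U s t) :=
  ((nice_p1 hsm hs).smul_s).add ((nice_p2 hsm hs).smul_t)

lemma pd2_AU {U : ℝ → ℝ → ℝ} (hsm : Sm U) :
    pd2 (fun s t => s * pd1 U s t + t * pd2 U s t)
      = fun s t => s * pd2 (pd1 U) s t + (pd2 U s t + t * pd2 (pd2 U) s t) := by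
  rw [pd2_addF (sm_coord1.mul hsm.p1) (sm_coord2.mul hsm.p2),
    pd2_smul_sF hsm.p1, pd2_smul_tF hsm.p2]

lemma neumann_AU {U : ℝ → ℝ → ℝ} (hsm : Sm U) (hN : ∀ s, pd2 U s 0 = 0) :
    ∀ s, pd2 (fun s' t' => s' * pd1 U s' t' + t' * pd2 U s' t') s 0 = 0 := by
  intro s
  have h1 : pd2 (pd1 U) s 0 = 0 := by
    rw [← hsm.comm]
    show deriv (fun x => pd2 U x 0) s = 0
    rw [show (fun x => pd2 U x 0) = fun _ : ℝ => (0:ℝ) from funext hN]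
    exact deriv_const s 0
  simp [pd2_AU hsm, h1, hN s]

lemma hop_lin {θ c d : ℝ} {f g : ℝ → ℝ → ℝ} (hf : Sm f) (hg : Sm g) (s t : ℝ) :
    Hop θ (fun s' t' => c * f s' t' + d * g s' t') s t
      = c * Hop θ f s t + d * Hop θ g s t := by
  have e1 : pd1 (pd1 (fun s' t' => c * f s' t' + d * g s' t'))
      = fun s' t' => c * pd1 (pd1 f) s' t' + d * pd1 (pd1 g) s' t' := by
    rw [pd1_addF (hf.const_mul c) (hg.const_mul d), pd1_const_mulF hf, pd1_const_mulF hg,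
      pd1_addF (hf.p1.const_mul c) (hg.p1.const_mul d), pd1_const_mulF hf.p1,
      pd1_const_mulF hg.p1]
  have e2 : pd2 (pd2 (fun s' t' => c * f s' t' + d * g s' t'))
      = fun s' t' => c * pd2 (pd2 f) s' t' + d * pd2 (pd2 g) s' t' := by
    rw [pd2_addF (hf.const_mul c) (hg.const_mul d), pd2_const_mulF hf, pd2_const_mulF hg,
      pd2_addF (hf.p2.const_mul c) (hg.p2.const_mul d), pd2_const_mulF hf.p2,
      pd2_const_mulF hg.p2]
  simp only [Hop, e1, e2]
  ring

/-- The virial identity at a point of the family. -/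
lemma virial {a b : ℝ} {u : ℝ → ℝ → ℝ → ℝ} {σ : ℝ → ℝ} {x : ℝ}
    (h : IsSmoothFamily a b u σ) (hx : x ∈ Set.Ioo a b) :
    intHalf (fun s t => (Vpot x s t)^2 * (u x s t * u x s t)) = σ x / 2 := by
  have hU := h.eigen x hx
  have hsm : Sm (u x) := hU.smooth
  have nU : Nice (u x) := nice_U hU
  have nA : Nice (fun s t => s * pd1 (u x) s t + t * pd2 (u x) s t) :=
    nice_AU hsm hU.schwartz
  have hp := pair_eigen (θ := x) (σv := σ x) nU hU.neumann hU.eigen nA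
    (neumann_AU hsm hU.neumann)
  have decUU : Dec (fun s t => u x s t * u x s t) := nU.d0.mul nU.d0
  have iAUu : Integrable (fun q : ℝ × ℝ =>
      (fun s t => (s * pd1 (u x) s t + t * pd2 (u x) s t) * u x s t) q.1 q.2) HP :=
    integrable_HP ((nA.sm.cont).mul nU.sm.cont) (nA.d0.mul nU.d0)
  have iUU : Integrable (fun q : ℝ × ℝ => u x q.1 q.2 * u x q.1 q.2) HP :=
    integrable_HP (nU.sm.cont.mul nU.sm.cont) decUU
  have iV2UU : Integrable (fun q : ℝ × ℝ =>
      (Vpot x q.1 q.2)^2 * (u x q.1 q.2 * u x q.1 q.2)) HP := by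
    apply integrable_HP (f := fun s t => (Vpot x s t)^2 * (u x s t * u x s t))
      (((cont_V x).pow 2).mul (nU.sm.cont.mul nU.sm.cont))
    exact (dec_V (dec_V decUU)).of_eq (fun s t ht => by ring)
  have hsc := hop_scaling (θ := x) (σv := σ x) hsm hU.eigen
  have eL : intHalf (fun s t =>
        Hop x (fun s' t' => s' * pd1 (u x) s' t' + t' * pd2 (u x) s' t') s t * u x s t)
      = σ x * intHalf (fun s t => (s * pd1 (u x) s t + t * pd2 (u x) s t) * u x s t)
        + (2 * σ x) * intHalf (fun s t => u x s t * u x s t)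
        + (-4) * intHalf (fun s t => (Vpot x s t)^2 * (u x s t * u x s t)) := by
    rw [← intHalf_lc3 (σ x) (2 * σ x) (-4) iAUu iUU iV2UU]
    apply intHalf_congr
    intro s t ht
    rw [hsc s t ht]
    ring
  have ebeta : intHalf (fun s t =>
        (fun s' t' => s' * pd1 (u x) s' t' + t' * pd2 (u x) s' t') s t * u x s t)
      = intHalf (fun s t => (s * pd1 (u x) s t + t * pd2 (u x) s t) * u x s t) := rfl
  have hnorm : intHalf (fun s t => u x s t * u x s t) = 1 := by
    rw [intHalf_congr (g := fun s t => (u x s t)^2) (fun s t ht => by ring)]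
    exact hU.normalized
  rw [eL, ebeta, hnorm] at hp
  linarith

/-- The Feynman–Hellmann identity at a point of the family. -/
lemma hf_id {a b : ℝ} {u : ℝ → ℝ → ℝ → ℝ} {σ : ℝ → ℝ} {x : ℝ}
    (h : IsSmoothFamily a b u σ) (hx : x ∈ Set.Ioo a b) :
    deriv σ x
      = 2 * intHalf (fun s t => Vpot x s t * DVpot x s t * (u x s t * u x s t)) := by
  have hU := h.eigen x hx
  have nU : Nice (u x) := nice_U hU
  have nW : Nice (pdθ u x) := nice_W h hx
  have hp := pair_eigen (θ := x) (σv := σ x) nU hU.neumann hU.eigen nW (neumann_W h hx)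
  have decUU : Dec (fun s t => u x s t * u x s t) := nU.d0.mul nU.d0
  have iWU : Integrable (fun q : ℝ × ℝ => pdθ u x q.1 q.2 * u x q.1 q.2) HP :=
    integrable_HP (nW.sm.cont.mul nU.sm.cont) (nW.d0.mul nU.d0)
  have iUU : Integrable (fun q : ℝ × ℝ => u x q.1 q.2 * u x q.1 q.2) HP :=
    integrable_HP (nU.sm.cont.mul nU.sm.cont) decUU
  have iVDVUU : Integrable (fun q : ℝ × ℝ =>
      Vpot x q.1 q.2 * DVpot x q.1 q.2 * (u x q.1 q.2 * u x q.1 q.2)) HP := by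
    apply integrable_HP (f := fun s t => Vpot x s t * DVpot x s t * (u x s t * u x s t))
      (((cont_V x).mul (sm_DV x).cont).mul (nU.sm.cont.mul nU.sm.cont))
    exact (dec_V (dec_DV decUU)).of_eq (fun s t ht => by ring)
  have hpw := hop_pdθ h hx
  have eL : intHalf (fun s t => Hop x (pdθ u x) s t * u x s t)
      = σ x * intHalf (fun s t => pdθ u x s t * u x s t)
        + deriv σ x * intHalf (fun s t => u x s t * u x s t)
        + (-2) * intHalf (fun s t => Vpot x s t * DVpot x s t * (u x s t * u x s t)) := by
    rw [← intHalf_lc3 (σ x) (deriv σ x) (-2) iWU iUU iVDVUU]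
    apply intHalf_congr
    intro s t ht
    rw [hpw s t ht]
    ring
  have hnorm : intHalf (fun s t => u x s t * u x s t) = 1 := by
    rw [intHalf_congr (g := fun s t => (u x s t)^2) (fun s t ht => by ring)]
    exact hU.normalized
  rw [eL, hnorm] at hp
  linarith

end PerX
section ParamId

variable {a b : ℝ} {u : ℝ → ℝ → ℝ → ℝ} {σ : ℝ → ℝ} {θ : ℝ}

lemma fam_setup (h : IsSmoothFamily a b u σ) (hθ : θ ∈ Set.Ioo a b) :
    ∃ ε > 0, ∃ CC : ℝ, 0 ≤ CC ∧ ∀ x, |x - θ| < ε → x ∈ Set.Ioo a b ∧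
      ∀ s t : ℝ, 0 ≤ t → |u x s t| ≤ CC * ((1 + |s| + t)^6)⁻¹ ∧
        |pdθ u x s t| ≤ CC * ((1 + |s| + t)^6)⁻¹ := by
  obtain ⟨δ, hδ, hball⟩ := Metric.isOpen_iff.mp isOpen_Ioo θ hθ
  obtain ⟨ε₀, hε₀, C₀, hC₀, hb₀⟩ := fam_bound h hθ 0 6
  obtain ⟨ε₁, hε₁, C₁, hC₁, hb₁⟩ := fam_bound h hθ 1 6
  refine ⟨min δ (min ε₀ ε₁), by positivity, max C₀ C₁, le_max_of_le_left hC₀, ?_⟩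
  intro x hx
  have hxδ : |x - θ| < δ := lt_of_lt_of_le hx (min_le_left _ _)
  have hx0 : |x - θ| < ε₀ := lt_of_lt_of_le hx (le_trans (min_le_right _ _) (min_le_left _ _))
  have hx1 : |x - θ| < ε₁ := lt_of_lt_of_le hx (le_trans (min_le_right _ _) (min_le_right _ _))
  have hxI : x ∈ Set.Ioo a b := hball (by simpa [Metric.mem_ball, Real.dist_eq] using hxδ)
  refine ⟨hxI, fun s t ht => ⟨?_, ?_⟩⟩
  · have := hb₀ x hxI hx0 s t ht
    simp only [Function.iterate_zero, id_eq] at this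
    exact le_trans this (mul_le_mul_of_nonneg_right (le_max_left _ _) (by positivity))
  · have := hb₁ x hxI hx1 s t ht
    simp only [Function.iterate_one] at this
    exact le_trans this (mul_le_mul_of_nonneg_right (le_max_right _ _) (by positivity))

lemma one_le_X {s t : ℝ} (ht : 0 ≤ t) : (1:ℝ) ≤ 1 + |s| + t := by
  linarith [abs_nonneg s]

lemma one_abs_le_X {s t : ℝ} (ht : 0 ≤ t) : |(1:ℝ)| ≤ 1 + |s| + t := by
  rw [abs_one]; exact one_le_X ht

/-- integrability of `V^i DV^j (u x)·(w)` type integrands at a fixed family point. -/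
lemma int_uu (h : IsSmoothFamily a b u σ) {x : ℝ} (hx : x ∈ Set.Ioo a b) :
    Integrable (fun q : ℝ × ℝ => u x q.1 q.2 * u x q.1 q.2) HP := by
  have nU := nice_U (h.eigen x hx)
  exact integrable_HP (nU.sm.cont.mul nU.sm.cont) (nU.d0.mul nU.d0)

lemma int_V2uu (h : IsSmoothFamily a b u σ) {x : ℝ} (hx : x ∈ Set.Ioo a b) :
    Integrable (fun q : ℝ × ℝ => (Vpot x q.1 q.2)^2 * (u x q.1 q.2 * u x q.1 q.2)) HP := by
  have nU := nice_U (h.eigen x hx)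
  apply integrable_HP (f := fun s t => (Vpot x s t)^2 * (u x s t * u x s t))
    (((cont_V x).pow 2).mul (nU.sm.cont.mul nU.sm.cont))
  exact (dec_V (dec_V (nU.d0.mul nU.d0))).of_eq (fun s t ht => by ring)

lemma int_VDVuu (h : IsSmoothFamily a b u σ) {x : ℝ} (hx : x ∈ Set.Ioo a b) :
    Integrable (fun q : ℝ × ℝ =>
      Vpot x q.1 q.2 * DVpot x q.1 q.2 * (u x q.1 q.2 * u x q.1 q.2)) HP := by
  have nU := nice_U (h.eigen x hx)
  apply integrable_HP (f := fun s t => Vpot x s t * DVpot x s t * (u x s t * u x s t))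
    (((cont_V x).mul (sm_DV x).cont).mul (nU.sm.cont.mul nU.sm.cont))
  exact (dec_V (dec_DV (nU.d0.mul nU.d0))).of_eq (fun s t ht => by ring)

lemma int_uW (h : IsSmoothFamily a b u σ) {x : ℝ} (hx : x ∈ Set.Ioo a b) :
    Integrable (fun q : ℝ × ℝ => u x q.1 q.2 * pdθ u x q.1 q.2) HP := by
  have nU := nice_U (h.eigen x hx); have nW := nice_W h hx
  exact integrable_HP (nU.sm.cont.mul nW.sm.cont) (nU.d0.mul nW.d0)

lemma int_Wu (h : IsSmoothFamily a b u σ) {x : ℝ} (hx : x ∈ Set.Ioo a b) :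
    Integrable (fun q : ℝ × ℝ => pdθ u x q.1 q.2 * u x q.1 q.2) HP := by
  have nU := nice_U (h.eigen x hx); have nW := nice_W h hx
  exact integrable_HP (nW.sm.cont.mul nU.sm.cont) (nW.d0.mul nU.d0)

lemma int_V2uW (h : IsSmoothFamily a b u σ) {x : ℝ} (hx : x ∈ Set.Ioo a b) :
    Integrable (fun q : ℝ × ℝ =>
      Vpot x q.1 q.2 * Vpot x q.1 q.2 * (u x q.1 q.2 * pdθ u x q.1 q.2)) HP := by
  have nU := nice_U (h.eigen x hx); have nW := nice_W h hx
  apply integrable_HP (f := fun s t => Vpot x s t * Vpot x s t * (u x s t * pdθ u x s t))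
    (((cont_V x).mul (cont_V x)).mul (nU.sm.cont.mul nW.sm.cont))
  exact (dec_V (dec_V (nU.d0.mul nW.d0))).of_eq (fun s t ht => by ring)

lemma int_V2Wu (h : IsSmoothFamily a b u σ) {x : ℝ} (hx : x ∈ Set.Ioo a b) :
    Integrable (fun q : ℝ × ℝ =>
      Vpot x q.1 q.2 * Vpot x q.1 q.2 * (pdθ u x q.1 q.2 * u x q.1 q.2)) HP := by
  have nU := nice_U (h.eigen x hx); have nW := nice_W h hx
  apply integrable_HP (f := fun s t => Vpot x s t * Vpot x s t * (pdθ u x s t * u x s t))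
    (((cont_V x).mul (cont_V x)).mul (nW.sm.cont.mul nU.sm.cont))
  exact (dec_V (dec_V (nW.d0.mul nU.d0))).of_eq (fun s t ht => by ring)

lemma int_VDVuW (h : IsSmoothFamily a b u σ) {x : ℝ} (hx : x ∈ Set.Ioo a b) :
    Integrable (fun q : ℝ × ℝ =>
      Vpot x q.1 q.2 * DVpot x q.1 q.2 * (u x q.1 q.2 * pdθ u x q.1 q.2)) HP := by
  have nU := nice_U (h.eigen x hx); have nW := nice_W h hx
  apply integrable_HP (f := fun s t => Vpot x s t * DVpot x s t * (u x s t * pdθ u x s t))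
    (((cont_V x).mul (sm_DV x).cont).mul (nU.sm.cont.mul nW.sm.cont))
  exact (dec_V (dec_DV (nU.d0.mul nW.d0))).of_eq (fun s t ht => by ring)

lemma int_VDVWu (h : IsSmoothFamily a b u σ) {x : ℝ} (hx : x ∈ Set.Ioo a b) :
    Integrable (fun q : ℝ × ℝ =>
      Vpot x q.1 q.2 * DVpot x q.1 q.2 * (pdθ u x q.1 q.2 * u x q.1 q.2)) HP := by
  have nU := nice_U (h.eigen x hx); have nW := nice_W h hx
  apply integrable_HP (f := fun s t => Vpot x s t * DVpot x s t * (pdθ u x s t * u x s t))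
    (((cont_V x).mul (sm_DV x).cont).mul (nW.sm.cont.mul nU.sm.cont))
  exact (dec_V (dec_DV (nW.d0.mul nU.d0))).of_eq (fun s t ht => by ring)

lemma int_DVDVuu (h : IsSmoothFamily a b u σ) {x : ℝ} (hx : x ∈ Set.Ioo a b) :
    Integrable (fun q : ℝ × ℝ =>
      DVpot x q.1 q.2 * DVpot x q.1 q.2 * (u x q.1 q.2 * u x q.1 q.2)) HP := by
  have nU := nice_U (h.eigen x hx)
  apply integrable_HP (f := fun s t => DVpot x s t * DVpot x s t * (u x s t * u x s t))
    (((sm_DV x).cont.mul (sm_DV x).cont).mul (nU.sm.cont.mul nU.sm.cont))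
  exact (dec_DV (dec_DV (nU.d0.mul nU.d0))).of_eq (fun s t ht => by ring)

/-- Orthogonality `∫ u ∂θu = 0`. -/
lemma E_zero (h : IsSmoothFamily a b u σ) (hθ : θ ∈ Set.Ioo a b) :
    intHalf (fun s t => u θ s t * pdθ u θ s t) = 0 := by
  obtain ⟨ε, hε, CC, hCC, hset⟩ := fam_setup h hθ
  have hD : HasDerivAt (fun x => intHalf (fun s t => u x s t * u x s t))
      (intHalf (fun s t => pdθ u θ s t * u θ s t + u θ s t * pdθ u θ s t)) θ := by
    apply hasDerivAt_intHalf (C := 2 * CC^2)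
      (f := fun x s t => u x s t * u x s t)
      (g := fun x s t => pdθ u x s t * u x s t + u x s t * pdθ u x s t) hε
    · intro x hx
      exact int_uu h (hset x hx).1
    · have nU := nice_U (h.eigen θ hθ); have nW := nice_W h hθ
      exact (nW.sm.cont.mul nU.sm.cont).add (nU.sm.cont.mul nW.sm.cont)
    · intro x hx s t ht
      obtain ⟨hu', hw'⟩ := (hset x hx).2 s t ht
      have hX := one_le_X (s := s) ht
      have h1 : |pdθ u x s t * u x s t| ≤ CC^2 * ((1 + |s| + t)^4)⁻¹ := by
        have := atom_bound (c1 := 1) (c2 := 1) hX hCC hw' hu' (one_abs_le_X ht) (one_abs_le_X ht)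
        simpa using this
      have h2 : |u x s t * pdθ u x s t| ≤ CC^2 * ((1 + |s| + t)^4)⁻¹ := by
        have := atom_bound (c1 := 1) (c2 := 1) hX hCC hu' hw' (one_abs_le_X ht) (one_abs_le_X ht)
        simpa using this
      calc |pdθ u x s t * u x s t + u x s t * pdθ u x s t|
          ≤ |pdθ u x s t * u x s t| + |u x s t * pdθ u x s t| := abs_add_le _ _
        _ ≤ CC^2 * ((1 + |s| + t)^4)⁻¹ + CC^2 * ((1 + |s| + t)^4)⁻¹ := add_le_add h1 h2
        _ = 2 * CC^2 * ((1 + |s| + t)^4)⁻¹ := by ring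
    · intro x hx s t ht
      have hu' := hasDerivAt_uθ h (hset x hx).1 s t
      exact hu'.mul hu'
  have hconst : (fun x => intHalf (fun s t => u x s t * u x s t)) =ᶠ[nhds θ]
      (fun _ => (1:ℝ)) := by
    filter_upwards [isOpen_Ioo.mem_nhds hθ] with y hy
    rw [intHalf_congr (g := fun s t => (u y s t)^2) (fun s t ht => by ring)]
    exact (h.eigen y hy).normalized
  have h0 : HasDerivAt (fun _ : ℝ => (1:ℝ))
      (intHalf (fun s t => pdθ u θ s t * u θ s t + u θ s t * pdθ u θ s t)) θ :=
    hD.congr_of_eventuallyEq hconst.symm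
  have hval : intHalf (fun s t => pdθ u θ s t * u θ s t + u θ s t * pdθ u θ s t) = 0 :=
    h0.unique (hasDerivAt_const θ 1)
  have hsplit : intHalf (fun s t => pdθ u θ s t * u θ s t + u θ s t * pdθ u θ s t)
      = 2 * intHalf (fun s t => u θ s t * pdθ u θ s t) := by
    rw [← intHalf_const_mul]
    apply intHalf_congr
    intro s t ht
    ring
  rw [hsplit] at hval
  linarith

/-- `∫ V² u ∂θu = -σ'/4`. -/
lemma L_id (h : IsSmoothFamily a b u σ) (hθ : θ ∈ Set.Ioo a b) :
    intHalf (fun s t => Vpot θ s t * Vpot θ s t * (u θ s t * pdθ u θ s t))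
      = - deriv σ θ / 4 := by
  obtain ⟨ε, hε, CC, hCC, hset⟩ := fam_setup h hθ
  have hD : HasDerivAt (fun x => intHalf (fun s t => (Vpot x s t)^2 * (u x s t * u x s t)))
      (intHalf (fun s t => 2 * Vpot θ s t * DVpot θ s t * (u θ s t * u θ s t)
        + (Vpot θ s t)^2 * (pdθ u θ s t * u θ s t + u θ s t * pdθ u θ s t))) θ := by
    apply hasDerivAt_intHalf (C := 4 * CC^2)
      (f := fun x s t => (Vpot x s t)^2 * (u x s t * u x s t))
      (g := fun x s t => 2 * Vpot x s t * DVpot x s t * (u x s t * u x s t)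
        + (Vpot x s t)^2 * (pdθ u x s t * u x s t + u x s t * pdθ u x s t)) hε
    · intro x hx
      exact int_V2uu h (hset x hx).1
    · have nU := nice_U (h.eigen θ hθ); have nW := nice_W h hθ
      apply Continuous.add
      · exact ((((continuous_const.mul (cont_V θ)).mul (sm_DV θ).cont)).mul
          (nU.sm.cont.mul nU.sm.cont))
      · exact ((cont_V θ).pow 2).mul
          ((nW.sm.cont.mul nU.sm.cont).add (nU.sm.cont.mul nW.sm.cont))
    · intro x hx s t ht
      obtain ⟨hu', hw'⟩ := (hset x hx).2 s t ht
      have hX := one_le_X (s := s) ht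
      have hV := absV_le (x := x) (s := s) ht
      have hDV := absDV_le (x := x) (s := s) ht
      have h1 : |Vpot x s t * DVpot x s t * (u x s t * u x s t)|
          ≤ CC^2 * ((1 + |s| + t)^4)⁻¹ := atom_bound hX hCC hu' hu' hV hDV
      have h2 : |Vpot x s t * Vpot x s t * (pdθ u x s t * u x s t)|
          ≤ CC^2 * ((1 + |s| + t)^4)⁻¹ := atom_bound hX hCC hw' hu' hV hV
      have h3 : |Vpot x s t * Vpot x s t * (u x s t * pdθ u x s t)|
          ≤ CC^2 * ((1 + |s| + t)^4)⁻¹ := atom_bound hX hCC hu' hw' hV hV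
      have he : 2 * Vpot x s t * DVpot x s t * (u x s t * u x s t)
          + (Vpot x s t)^2 * (pdθ u x s t * u x s t + u x s t * pdθ u x s t)
          = 2 * (Vpot x s t * DVpot x s t * (u x s t * u x s t))
            + (Vpot x s t * Vpot x s t * (pdθ u x s t * u x s t)
              + Vpot x s t * Vpot x s t * (u x s t * pdθ u x s t)) := by ring
      rw [he]
      calc |2 * (Vpot x s t * DVpot x s t * (u x s t * u x s t))
            + (Vpot x s t * Vpot x s t * (pdθ u x s t * u x s t)
              + Vpot x s t * Vpot x s t * (u x s t * pdθ u x s t))|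
          ≤ |2 * (Vpot x s t * DVpot x s t * (u x s t * u x s t))|
            + (|Vpot x s t * Vpot x s t * (pdθ u x s t * u x s t)|
              + |Vpot x s t * Vpot x s t * (u x s t * pdθ u x s t)|) :=
            le_trans (abs_add_le _ _) (by gcongr; exact abs_add_le _ _)
        _ ≤ 2 * (CC^2 * ((1 + |s| + t)^4)⁻¹)
            + (CC^2 * ((1 + |s| + t)^4)⁻¹ + CC^2 * ((1 + |s| + t)^4)⁻¹) := by
            rw [abs_mul]
            have : |(2:ℝ)| = 2 := by norm_num
            rw [this]
            gcongr
        _ = 4 * CC^2 * ((1 + |s| + t)^4)⁻¹ := by ring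
    · intro x hx s t ht
      have hu' := hasDerivAt_uθ h (hset x hx).1 s t
      exact (hasDerivAt_V2θ s t x).mul (hu'.mul hu')
  have hvir : (fun x => intHalf (fun s t => (Vpot x s t)^2 * (u x s t * u x s t)))
      =ᶠ[nhds θ] (fun x => σ x / 2) := by
    filter_upwards [isOpen_Ioo.mem_nhds hθ] with y hy
    exact virial h hy
  have hs2 : HasDerivAt (fun x => σ x / 2) (deriv σ θ / 2) θ :=
    (hasDerivAt_sigma h hθ).div_const 2
  have hval := ((hD.congr_of_eventuallyEq hvir.symm).unique hs2).symm
  -- split the derivative integral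
  have hsplit : intHalf (fun s t => 2 * Vpot θ s t * DVpot θ s t * (u θ s t * u θ s t)
        + (Vpot θ s t)^2 * (pdθ u θ s t * u θ s t + u θ s t * pdθ u θ s t))
      = 2 * intHalf (fun s t => Vpot θ s t * DVpot θ s t * (u θ s t * u θ s t))
        + 2 * intHalf (fun s t => Vpot θ s t * Vpot θ s t * (u θ s t * pdθ u θ s t)) := by
    have hWu : intHalf (fun s t => Vpot θ s t * Vpot θ s t * (pdθ u θ s t * u θ s t))
        = intHalf (fun s t => Vpot θ s t * Vpot θ s t * (u θ s t * pdθ u θ s t)) :=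
      intHalf_congr (fun s t ht => by ring)
    have := intHalf_lc3 (f1 := fun s t => Vpot θ s t * DVpot θ s t * (u θ s t * u θ s t))
      (f2 := fun s t => Vpot θ s t * Vpot θ s t * (pdθ u θ s t * u θ s t))
      (f3 := fun s t => Vpot θ s t * Vpot θ s t * (u θ s t * pdθ u θ s t))
      2 1 1 (int_VDVuu h hθ) (int_V2Wu h hθ) (int_V2uW h hθ)
    calc intHalf (fun s t => 2 * Vpot θ s t * DVpot θ s t * (u θ s t * u θ s t)
        + (Vpot θ s t)^2 * (pdθ u θ s t * u θ s t + u θ s t * pdθ u θ s t))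
        = intHalf (fun s t =>
            2 * (Vpot θ s t * DVpot θ s t * (u θ s t * u θ s t))
            + 1 * (Vpot θ s t * Vpot θ s t * (pdθ u θ s t * u θ s t))
            + 1 * (Vpot θ s t * Vpot θ s t * (u θ s t * pdθ u θ s t))) :=
          intHalf_congr (fun s t ht => by ring)
      _ = 2 * intHalf (fun s t => Vpot θ s t * DVpot θ s t * (u θ s t * u θ s t))
          + 1 * intHalf (fun s t => Vpot θ s t * Vpot θ s t * (pdθ u θ s t * u θ s t))
          + 1 * intHalf (fun s t => Vpot θ s t * Vpot θ s t * (u θ s t * pdθ u θ s t)) := this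
      _ = 2 * intHalf (fun s t => Vpot θ s t * DVpot θ s t * (u θ s t * u θ s t))
          + 2 * intHalf (fun s t => Vpot θ s t * Vpot θ s t * (u θ s t * pdθ u θ s t)) := by
          rw [hWu]; ring
  rw [hsplit] at hval
  have hR : intHalf (fun s t => Vpot θ s t * DVpot θ s t * (u θ s t * u θ s t))
      = deriv σ θ / 2 := by
    have := hf_id h hθ
    linarith
  rw [hR] at hval
  linarith

/-- second derivative of `σ`. -/
lemma sigma2_id (h : IsSmoothFamily a b u σ) (hθ : θ ∈ Set.Ioo a b) :
    deriv (deriv σ) θ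
      = 2 * intHalf (fun s t => DVpot θ s t * DVpot θ s t * (u θ s t * u θ s t))
        - 2 * intHalf (fun s t => Vpot θ s t * Vpot θ s t * (u θ s t * u θ s t))
        + 4 * intHalf (fun s t => Vpot θ s t * DVpot θ s t * (u θ s t * pdθ u θ s t)) := by
  obtain ⟨ε, hε, CC, hCC, hset⟩ := fam_setup h hθ
  have hD : HasDerivAt
      (fun x => intHalf (fun s t => Vpot x s t * DVpot x s t * (u x s t * u x s t)))
      (intHalf (fun s t =>
        (DVpot θ s t * DVpot θ s t + Vpot θ s t * -Vpot θ s t) * (u θ s t * u θ s t)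
        + Vpot θ s t * DVpot θ s t * (pdθ u θ s t * u θ s t + u θ s t * pdθ u θ s t))) θ := by
    apply hasDerivAt_intHalf (C := 4 * CC^2)
      (f := fun x s t => Vpot x s t * DVpot x s t * (u x s t * u x s t))
      (g := fun x s t =>
        (DVpot x s t * DVpot x s t + Vpot x s t * -Vpot x s t) * (u x s t * u x s t)
        + Vpot x s t * DVpot x s t * (pdθ u x s t * u x s t + u x s t * pdθ u x s t)) hε
    · intro x hx
      exact int_VDVuu h (hset x hx).1
    · have nU := nice_U (h.eigen θ hθ); have nW := nice_W h hθ
      apply Continuous.add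
      · exact (((sm_DV θ).cont.mul (sm_DV θ).cont).add
          ((cont_V θ).mul (cont_V θ).neg)).mul (nU.sm.cont.mul nU.sm.cont)
      · exact ((cont_V θ).mul (sm_DV θ).cont).mul
          ((nW.sm.cont.mul nU.sm.cont).add (nU.sm.cont.mul nW.sm.cont))
    · intro x hx s t ht
      obtain ⟨hu', hw'⟩ := (hset x hx).2 s t ht
      have hX := one_le_X (s := s) ht
      have hV := absV_le (x := x) (s := s) ht
      have hDV := absDV_le (x := x) (s := s) ht
      have hVn : |-Vpot x s t| ≤ 1 + |s| + t := by rw [abs_neg]; exact hV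
      have h1 : |DVpot x s t * DVpot x s t * (u x s t * u x s t)|
          ≤ CC^2 * ((1 + |s| + t)^4)⁻¹ := atom_bound hX hCC hu' hu' hDV hDV
      have h2 : |Vpot x s t * -Vpot x s t * (u x s t * u x s t)|
          ≤ CC^2 * ((1 + |s| + t)^4)⁻¹ := atom_bound hX hCC hu' hu' hV hVn
      have h3 : |Vpot x s t * DVpot x s t * (pdθ u x s t * u x s t)|
          ≤ CC^2 * ((1 + |s| + t)^4)⁻¹ := atom_bound hX hCC hw' hu' hV hDV
      have h4 : |Vpot x s t * DVpot x s t * (u x s t * pdθ u x s t)|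
          ≤ CC^2 * ((1 + |s| + t)^4)⁻¹ := atom_bound hX hCC hu' hw' hV hDV
      have he : (DVpot x s t * DVpot x s t + Vpot x s t * -Vpot x s t) * (u x s t * u x s t)
          + Vpot x s t * DVpot x s t * (pdθ u x s t * u x s t + u x s t * pdθ u x s t)
          = (DVpot x s t * DVpot x s t * (u x s t * u x s t)
              + Vpot x s t * -Vpot x s t * (u x s t * u x s t))
            + (Vpot x s t * DVpot x s t * (pdθ u x s t * u x s t)
              + Vpot x s t * DVpot x s t * (u x s t * pdθ u x s t)) := by ring
      rw [he]
      calc |(DVpot x s t * DVpot x s t * (u x s t * u x s t)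
              + Vpot x s t * -Vpot x s t * (u x s t * u x s t))
            + (Vpot x s t * DVpot x s t * (pdθ u x s t * u x s t)
              + Vpot x s t * DVpot x s t * (u x s t * pdθ u x s t))|
          ≤ (|DVpot x s t * DVpot x s t * (u x s t * u x s t)|
              + |Vpot x s t * -Vpot x s t * (u x s t * u x s t)|)
            + (|Vpot x s t * DVpot x s t * (pdθ u x s t * u x s t)|
              + |Vpot x s t * DVpot x s t * (u x s t * pdθ u x s t)|) :=
            le_trans (abs_add_le _ _) (by gcongr <;> exact abs_add_le _ _)
        _ ≤ CC^2 * ((1 + |s| + t)^4)⁻¹ + CC^2 * ((1 + |s| + t)^4)⁻¹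
            + (CC^2 * ((1 + |s| + t)^4)⁻¹ + CC^2 * ((1 + |s| + t)^4)⁻¹) := by
            gcongr
        _ = 4 * CC^2 * ((1 + |s| + t)^4)⁻¹ := by ring
    · intro x hx s t ht
      have hu' := hasDerivAt_uθ h (hset x hx).1 s t
      exact ((hasDerivAt_Vθ s t x).mul (hasDerivAt_DVθ s t x)).mul (hu'.mul hu')
  have hhf : (fun x => intHalf (fun s t => Vpot x s t * DVpot x s t * (u x s t * u x s t)))
      =ᶠ[nhds θ] (fun x => deriv σ x / 2) := by
    filter_upwards [isOpen_Ioo.mem_nhds hθ] with y hy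
    have := hf_id h hy
    linarith
  have hs2 : HasDerivAt (fun x => deriv σ x / 2) (deriv (deriv σ) θ / 2) θ :=
    (hasDerivAt_sigma' h hθ).div_const 2
  have hval := ((hD.congr_of_eventuallyEq hhf.symm).unique hs2).symm
  have hsplit : intHalf (fun s t =>
        (DVpot θ s t * DVpot θ s t + Vpot θ s t * -Vpot θ s t) * (u θ s t * u θ s t)
        + Vpot θ s t * DVpot θ s t * (pdθ u θ s t * u θ s t + u θ s t * pdθ u θ s t))
      = intHalf (fun s t => DVpot θ s t * DVpot θ s t * (u θ s t * u θ s t))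
        - intHalf (fun s t => Vpot θ s t * Vpot θ s t * (u θ s t * u θ s t))
        + 2 * intHalf (fun s t => Vpot θ s t * DVpot θ s t * (u θ s t * pdθ u θ s t)) := by
    have hWu : intHalf (fun s t => Vpot θ s t * DVpot θ s t * (pdθ u θ s t * u θ s t))
        = intHalf (fun s t => Vpot θ s t * DVpot θ s t * (u θ s t * pdθ u θ s t)) :=
      intHalf_congr (fun s t ht => by ring)
    have hV2 : Integrable (fun q : ℝ × ℝ =>
        Vpot θ q.1 q.2 * Vpot θ q.1 q.2 * (u θ q.1 q.2 * u θ q.1 q.2)) HP := by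
      have := int_V2uu h hθ
      apply this.congr
      apply Filter.Eventually.of_forall
      intro q
      ring
    have h4 : intHalf (fun s t =>
          1 * (DVpot θ s t * DVpot θ s t * (u θ s t * u θ s t))
          + (-1) * (Vpot θ s t * Vpot θ s t * (u θ s t * u θ s t))
          + 1 * (Vpot θ s t * DVpot θ s t * (pdθ u θ s t * u θ s t))) =
        1 * intHalf (fun s t => DVpot θ s t * DVpot θ s t * (u θ s t * u θ s t))
          + (-1) * intHalf (fun s t => Vpot θ s t * Vpot θ s t * (u θ s t * u θ s t))
          + 1 * intHalf (fun s t => Vpot θ s t * DVpot θ s t * (pdθ u θ s t * u θ s t)) :=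
      intHalf_lc3 1 (-1) 1 (int_DVDVuu h hθ) hV2 (int_VDVWu h hθ)
    have h5 : intHalf (fun s t =>
        (DVpot θ s t * DVpot θ s t + Vpot θ s t * -Vpot θ s t) * (u θ s t * u θ s t)
        + Vpot θ s t * DVpot θ s t * (pdθ u θ s t * u θ s t + u θ s t * pdθ u θ s t))
        = intHalf (fun s t =>
          1 * (DVpot θ s t * DVpot θ s t * (u θ s t * u θ s t))
          + (-1) * (Vpot θ s t * Vpot θ s t * (u θ s t * u θ s t))
          + 1 * (Vpot θ s t * DVpot θ s t * (pdθ u θ s t * u θ s t)))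
          + intHalf (fun s t => Vpot θ s t * DVpot θ s t * (u θ s t * pdθ u θ s t)) := by
      have hadd := intHalf_add
        (f := fun s t =>
          1 * (DVpot θ s t * DVpot θ s t * (u θ s t * u θ s t))
          + (-1) * (Vpot θ s t * Vpot θ s t * (u θ s t * u θ s t))
          + 1 * (Vpot θ s t * DVpot θ s t * (pdθ u θ s t * u θ s t)))
        (g := fun s t => Vpot θ s t * DVpot θ s t * (u θ s t * pdθ u θ s t))
        ((((int_DVDVuu h hθ).const_mul 1).add (hV2.const_mul (-1))).add
          ((int_VDVWu h hθ).const_mul 1))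
        (int_VDVuW h hθ)
      rw [← hadd]
      apply intHalf_congr
      intro s t ht
      ring
    rw [h5, h4, hWu]
    ring
  rw [hsplit] at hval
  linarith

end ParamId
section ScalInst

variable {a b : ℝ} {u : ℝ → ℝ → ℝ → ℝ} {σ : ℝ → ℝ} {θ : ℝ}

lemma scal_1 (h : IsSmoothFamily a b u σ) (hθ : θ ∈ Set.Ioo a b) :
    intHalf (fun s t => u θ s t * (s * pd1 (u θ) s t + t * pd2 (u θ) s t)) = -1 := by
  have hU := h.eigen θ hθ
  have nU := nice_U hU
  have key := scaling_ibp (U := u θ) (p := fun _ _ => (1:ℝ)) hU.smooth (sm_const 1)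
    nU.d0 nU.d1 nU.d2
    (fun f hf => hf.of_eq (fun s t ht => by ring))
    (fun f hf => by
      simp only [pd1_constF]
      exact hf.of_bound (fun s t ht => by simp [abs_nonneg]))
    (fun f hf => by
      simp only [pd2_constF]
      exact hf.of_bound (fun s t ht => by simp [abs_nonneg]))
  have eL : intHalf (fun s t => (fun _ _ : ℝ => (1:ℝ)) s t * u θ s t
        * (s * pd1 (u θ) s t + t * pd2 (u θ) s t))
      = intHalf (fun s t => u θ s t * (s * pd1 (u θ) s t + t * pd2 (u θ) s t)) :=
    intHalf_congr (fun s t ht => by ring)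
  have eR : intHalf (fun s t => (2 * (fun _ _ : ℝ => (1:ℝ)) s t
        + (s * pd1 (fun _ _ : ℝ => (1:ℝ)) s t + t * pd2 (fun _ _ : ℝ => (1:ℝ)) s t))
          * (u θ s t * u θ s t))
      = 2 * intHalf (fun s t => u θ s t * u θ s t) := by
    rw [← intHalf_const_mul]
    apply intHalf_congr
    intro s t ht
    simp only [pd1_constF, pd2_constF]
    ring
  have hnorm : intHalf (fun s t => u θ s t * u θ s t) = 1 := by
    rw [intHalf_congr (g := fun s t => (u θ s t)^2) (fun s t ht => by ring)]
    exact hU.normalized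
  rw [eL, eR, hnorm] at key
  linarith

lemma scal_V2 (h : IsSmoothFamily a b u σ) (hθ : θ ∈ Set.Ioo a b) :
    intHalf (fun s t => Vpot θ s t * Vpot θ s t
        * (u θ s t * (s * pd1 (u θ) s t + t * pd2 (u θ) s t))) = - σ θ := by
  have hU := h.eigen θ hθ
  have nU := nice_U hU
  have e1 : pd1 (fun s t => Vpot θ s t * Vpot θ s t)
      = fun s t => -Real.sin θ * Vpot θ s t + Vpot θ s t * -Real.sin θ := by
    funext s t
    simp only [pd1_mulF (sm_V θ) (sm_V θ), pd1_V]
  have e2 : pd2 (fun s t => Vpot θ s t * Vpot θ s t)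
      = fun s t => Real.cos θ * Vpot θ s t + Vpot θ s t * Real.cos θ := by
    funext s t
    simp only [pd2_mulF (sm_V θ) (sm_V θ), pd2_V]
  have key := scaling_ibp (U := u θ) (p := fun s t => Vpot θ s t * Vpot θ s t)
    hU.smooth ((sm_V θ).mul (sm_V θ)) nU.d0 nU.d1 nU.d2
    (fun f hf => (dec_V (dec_V hf)).of_eq (fun s t ht => by ring))
    (fun f hf => by
      simp only [e1]
      exact ((dec_V hf).const_mul (-2 * Real.sin θ)).of_eq (fun s t ht => by ring))
    (fun f hf => by
      simp only [e2]
      exact ((dec_V hf).const_mul (2 * Real.cos θ)).of_eq (fun s t ht => by ring))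
  have eL : intHalf (fun s t => (fun s' t' => Vpot θ s' t' * Vpot θ s' t') s t * u θ s t
        * (s * pd1 (u θ) s t + t * pd2 (u θ) s t))
      = intHalf (fun s t => Vpot θ s t * Vpot θ s t
          * (u θ s t * (s * pd1 (u θ) s t + t * pd2 (u θ) s t))) :=
    intHalf_congr (fun s t ht => by ring)
  have eR : intHalf (fun s t => (2 * (fun s' t' => Vpot θ s' t' * Vpot θ s' t') s t
        + (s * pd1 (fun s' t' => Vpot θ s' t' * Vpot θ s' t') s t
          + t * pd2 (fun s' t' => Vpot θ s' t' * Vpot θ s' t') s t)) * (u θ s t * u θ s t))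
      = 4 * intHalf (fun s t => (Vpot θ s t)^2 * (u θ s t * u θ s t)) := by
    rw [← intHalf_const_mul]
    apply intHalf_congr
    intro s t ht
    simp only [e1, e2]
    simp only [Vpot]
    ring
  rw [eL, eR, virial h hθ] at key
  linarith

lemma scal_VDV (h : IsSmoothFamily a b u σ) (hθ : θ ∈ Set.Ioo a b) :
    intHalf (fun s t => Vpot θ s t * DVpot θ s t
        * (u θ s t * (s * pd1 (u θ) s t + t * pd2 (u θ) s t))) = - deriv σ θ := by
  have hU := h.eigen θ hθ
  have nU := nice_U hU
  have e1 : pd1 (fun s t => Vpot θ s t * DVpot θ s t)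
      = fun s t => -Real.sin θ * DVpot θ s t + Vpot θ s t * -Real.cos θ := by
    funext s t
    simp only [pd1_mulF (sm_V θ) (sm_DV θ), pd1_V, pd1_DV]
  have e2 : pd2 (fun s t => Vpot θ s t * DVpot θ s t)
      = fun s t => Real.cos θ * DVpot θ s t + Vpot θ s t * -Real.sin θ := by
    funext s t
    simp only [pd2_mulF (sm_V θ) (sm_DV θ), pd2_V, pd2_DV]
  have key := scaling_ibp (U := u θ) (p := fun s t => Vpot θ s t * DVpot θ s t)
    hU.smooth ((sm_V θ).mul (sm_DV θ)) nU.d0 nU.d1 nU.d2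
    (fun f hf => (dec_V (dec_DV hf)).of_eq (fun s t ht => by ring))
    (fun f hf => by
      simp only [e1]
      have hd : Dec (fun s t => -Real.sin θ * (DVpot θ s t * f s t)
          + -Real.cos θ * (Vpot θ s t * f s t)) :=
        ((dec_DV hf).const_mul (-Real.sin θ)).add ((dec_V hf).const_mul (-Real.cos θ))
      exact hd.of_eq (fun s t ht => by ring))
    (fun f hf => by
      simp only [e2]
      have hd : Dec (fun s t => Real.cos θ * (DVpot θ s t * f s t)
          + -Real.sin θ * (Vpot θ s t * f s t)) :=
        ((dec_DV hf).const_mul (Real.cos θ)).add ((dec_V hf).const_mul (-Real.sin θ))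
      exact hd.of_eq (fun s t ht => by ring))
  have eL : intHalf (fun s t => (fun s' t' => Vpot θ s' t' * DVpot θ s' t') s t * u θ s t
        * (s * pd1 (u θ) s t + t * pd2 (u θ) s t))
      = intHalf (fun s t => Vpot θ s t * DVpot θ s t
          * (u θ s t * (s * pd1 (u θ) s t + t * pd2 (u θ) s t))) :=
    intHalf_congr (fun s t ht => by ring)
  have eR : intHalf (fun s t => (2 * (fun s' t' => Vpot θ s' t' * DVpot θ s' t') s t
        + (s * pd1 (fun s' t' => Vpot θ s' t' * DVpot θ s' t') s t
          + t * pd2 (fun s' t' => Vpot θ s' t' * DVpot θ s' t') s t)) * (u θ s t * u θ s t))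
      = 4 * intHalf (fun s t => Vpot θ s t * DVpot θ s t * (u θ s t * u θ s t)) := by
    rw [← intHalf_const_mul]
    apply intHalf_congr
    intro s t ht
    simp only [e1, e2]
    simp only [Vpot, DVpot]
    ring
  have hR : intHalf (fun s t => Vpot θ s t * DVpot θ s t * (u θ s t * u θ s t))
      = deriv σ θ / 2 := by
    have := hf_id h hθ
    linarith
  rw [eL, eR, hR] at key
  linarith

end ScalInst

section Final

variable {a b : ℝ} {u : ℝ → ℝ → ℝ → ℝ} {σ : ℝ → ℝ} {θ : ℝ}

lemma neumann_comb {c d : ℝ} {A W : ℝ → ℝ → ℝ} (hA : Sm A) (hW : Sm W)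
    (hnA : ∀ s, pd2 A s 0 = 0) (hnW : ∀ s, pd2 W s 0 = 0) :
    ∀ s, pd2 (fun s' t' => c * A s' t' + d * W s' t') s 0 = 0 := by
  intro s
  have e : pd2 (fun s' t' => c * A s' t' + d * W s' t')
      = fun s' t' => c * pd2 A s' t' + d * pd2 W s' t' := by
    rw [pd2_addF (hA.const_mul c) (hW.const_mul d), pd2_const_mulF hA, pd2_const_mulF hW]
  rw [e]
  show c * pd2 A s 0 + d * pd2 W s 0 = 0
  rw [hnA s, hnW s]
  ring

lemma dec_Hop {θ : ℝ} {f : ℝ → ℝ → ℝ} (hf : Nice f) : Dec (Hop θ f) := by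
  have h1 : Dec (fun s t => (-1 : ℝ) * pd1 (pd1 f) s t + (-1 : ℝ) * pd2 (pd2 f) s t
      + Vpot θ s t * (Vpot θ s t * f s t)) :=
    ((hf.d11.const_mul (-1)).add (hf.d22.const_mul (-1))).add (dec_V (dec_V hf.d0))
  exact h1.of_eq (fun s t ht => by simp only [Hop]; ring)

lemma cont_Hop {θ : ℝ} {f : ℝ → ℝ → ℝ} (hf : Nice f) :
    Continuous (fun p : ℝ × ℝ => Hop θ f p.1 p.2) := by
  simp only [Hop]
  exact ((hf.sm.p1.p1.cont.neg.sub hf.sm.p2.p2.cont).add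
    (((cont_V θ).pow 2).mul hf.sm.cont))

lemma hop_comb {θ c d : ℝ} {U W : ℝ → ℝ → ℝ} (hsmU : Sm U) (hsmW : Sm W) (s t : ℝ) :
    Hop θ (fun s' t' => c * (s' * pd1 U s' t' + t' * pd2 U s' t') + d * W s' t') s t
      = c * Hop θ (fun s' t' => s' * pd1 U s' t' + t' * pd2 U s' t') s t
        + d * Hop θ W s t :=
  hop_lin (f := fun s' t' => s' * pd1 U s' t' + t' * pd2 U s' t')
    ((sm_coord1.mul hsmU.p1).add (sm_coord2.mul hsmU.p2)) hsmW s t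

theorem w0_main (h : IsSmoothFamily a b u σ) (hθ : θ ∈ Set.Ioo a b) :
    intHalf (fun s t =>
        (2 * deriv σ θ * (Vpot θ s t)^2 -
          2 * σ θ * Vpot θ s t * (- t * Real.sin θ - s * Real.cos θ))
          * (-(deriv σ θ / 2) * (s * pd1 (u θ) s t + t * pd2 (u θ) s t) + -(σ θ) * pdθ u θ s t) * u θ s t) +
      intHalf (fun s t =>
        (σ θ * (- t * Real.sin θ - s * Real.cos θ) - deriv σ θ * Vpot θ s t)^2
          * (u θ s t)^2)
      = ((σ θ)^2 * deriv (deriv σ) θ + (σ θ)^3) / 2 := by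
  have hU := h.eigen θ hθ
  have hsm : Sm (u θ) := hU.smooth
  have nU : Nice (u θ) := nice_U hU
  have nW : Nice (pdθ u θ) := nice_W h hθ
  have nA : Nice (fun s t => s * pd1 (u θ) s t + t * pd2 (u θ) s t) := nice_AU hsm hU.schwartz
  have nW0 : Nice (fun s t => -(deriv σ θ / 2) * (s * pd1 (u θ) s t + t * pd2 (u θ) s t) + -(σ θ) * pdθ u θ s t) := (nA.const_mul _).add (nW.const_mul _)
  have nW1 : Nice (fun s t => -(deriv σ θ / 2) * (s * pd1 (u θ) s t + t * pd2 (u θ) s t) + σ θ * pdθ u θ s t) := (nA.const_mul _).add (nW.const_mul _)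
  have nmA := neumann_AU hsm hU.neumann
  have nmW := neumann_W h hθ
  have nmW0 : ∀ s, pd2 (fun s' t' => -(deriv σ θ / 2) * (s' * pd1 (u θ) s' t' + t' * pd2 (u θ) s' t') + -(σ θ) * pdθ u θ s' t') s 0 = 0 := neumann_comb nA.sm nW.sm nmA nmW
  have nmW1 : ∀ s, pd2 (fun s' t' => -(deriv σ θ / 2) * (s' * pd1 (u θ) s' t' + t' * pd2 (u θ) s' t') + σ θ * pdθ u θ s' t') s 0 = 0 := neumann_comb nA.sm nW.sm nmA nmW
  have hHA := hop_scaling (θ := θ) (σv := σ θ) hsm hU.eigen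
  have hHW := hop_pdθ h hθ
  -- Hop formulas for the two combinations
  have hH1 : ∀ s t : ℝ, 0 ≤ t →
      Hop θ (fun s' t' => -(deriv σ θ / 2) * (s' * pd1 (u θ) s' t' + t' * pd2 (u θ) s' t') + σ θ * pdθ u θ s' t') s t
        = σ θ * (-(deriv σ θ / 2) * (s * pd1 (u θ) s t + t * pd2 (u θ) s t) + σ θ * pdθ u θ s t)
          + (2 * deriv σ θ * (Vpot θ s t)^2 - 2 * σ θ * Vpot θ s t * DVpot θ s t) * u θ s t := by
    intro s t ht
    have hc := hop_comb (θ := θ) (c := -(deriv σ θ / 2)) (d := σ θ) hsm nW.sm s t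
    rw [hc, hHA s t ht, hHW s t ht]
    ring
  have hH0 : ∀ s t : ℝ, 0 ≤ t →
      Hop θ (fun s' t' => -(deriv σ θ / 2) * (s' * pd1 (u θ) s' t' + t' * pd2 (u θ) s' t') + -(σ θ) * pdθ u θ s' t') s t
        = σ θ * (-(deriv σ θ / 2) * (s * pd1 (u θ) s t + t * pd2 (u θ) s t) + -(σ θ) * pdθ u θ s t)
          + (2 * deriv σ θ * (Vpot θ s t)^2 + 2 * σ θ * Vpot θ s t * DVpot θ s t - 2 * σ θ * deriv σ θ) * u θ s t := by
    intro s t ht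
    have hc := hop_comb (θ := θ) (c := -(deriv σ θ / 2)) (d := -(σ θ)) hsm nW.sm s t
    rw [hc, hHA s t ht, hHW s t ht]
    ring
  -- integrability facts
  have iH1w0 : Integrable (fun q : ℝ × ℝ =>
      Hop θ (fun s' t' => -(deriv σ θ / 2) * (s' * pd1 (u θ) s' t' + t' * pd2 (u θ) s' t') + σ θ * pdθ u θ s' t') q.1 q.2 * (fun s t => -(deriv σ θ / 2) * (s * pd1 (u θ) s t + t * pd2 (u θ) s t) + -(σ θ) * pdθ u θ s t) q.1 q.2) HP :=
    integrable_HP ((cont_Hop nW1).mul nW0.sm.cont) ((dec_Hop nW1).mul nW0.d0)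
  have iw1w0 : Integrable (fun q : ℝ × ℝ =>
      (fun s t => -(deriv σ θ / 2) * (s * pd1 (u θ) s t + t * pd2 (u θ) s t) + σ θ * pdθ u θ s t) q.1 q.2 * (fun s t => -(deriv σ θ / 2) * (s * pd1 (u θ) s t + t * pd2 (u θ) s t) + -(σ θ) * pdθ u θ s t) q.1 q.2) HP :=
    integrable_HP (nW1.sm.cont.mul nW0.sm.cont) (nW1.d0.mul nW0.d0)
  have iF1 : Integrable (fun q : ℝ × ℝ => (fun s t => Vpot θ s t * Vpot θ s t * (u θ s t * (s * pd1 (u θ) s t + t * pd2 (u θ) s t))) q.1 q.2) HP := by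
    apply integrable_HP (f := fun s t => Vpot θ s t * Vpot θ s t * (u θ s t * (s * pd1 (u θ) s t + t * pd2 (u θ) s t)))
      (((cont_V θ).mul (cont_V θ)).mul (nU.sm.cont.mul nA.sm.cont))
    exact (dec_V (dec_V (nU.d0.mul nA.d0))).of_eq (fun s t ht => by ring)
  have iF2 : Integrable (fun q : ℝ × ℝ => (fun s t => Vpot θ s t * Vpot θ s t * (u θ s t * pdθ u θ s t)) q.1 q.2) HP := int_V2uW h hθ
  have iF3 : Integrable (fun q : ℝ × ℝ => (fun s t => Vpot θ s t * DVpot θ s t * (u θ s t * (s * pd1 (u θ) s t + t * pd2 (u θ) s t))) q.1 q.2) HP := by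
    apply integrable_HP (f := fun s t => Vpot θ s t * DVpot θ s t * (u θ s t * (s * pd1 (u θ) s t + t * pd2 (u θ) s t)))
      (((cont_V θ).mul (sm_DV θ).cont).mul (nU.sm.cont.mul nA.sm.cont))
    exact (dec_V (dec_DV (nU.d0.mul nA.d0))).of_eq (fun s t ht => by ring)
  have iF4 : Integrable (fun q : ℝ × ℝ => (fun s t => Vpot θ s t * DVpot θ s t * (u θ s t * pdθ u θ s t)) q.1 q.2) HP := int_VDVuW h hθ
  have iF5 : Integrable (fun q : ℝ × ℝ => (fun s t => u θ s t * (s * pd1 (u θ) s t + t * pd2 (u θ) s t)) q.1 q.2) HP :=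
    integrable_HP (nU.sm.cont.mul nA.sm.cont) (nU.d0.mul nA.d0)
  have iF6 : Integrable (fun q : ℝ × ℝ => (fun s t => u θ s t * pdθ u θ s t) q.1 q.2) HP := int_uW h hθ
  have iG1 : Integrable (fun q : ℝ × ℝ => (fun s t => DVpot θ s t * DVpot θ s t * (u θ s t * u θ s t)) q.1 q.2) HP := int_DVDVuu h hθ
  have iG2 : Integrable (fun q : ℝ × ℝ => (fun s t => Vpot θ s t * DVpot θ s t * (u θ s t * u θ s t)) q.1 q.2) HP := int_VDVuu h hθ
  have iG3 : Integrable (fun q : ℝ × ℝ => (fun s t => Vpot θ s t * Vpot θ s t * (u θ s t * u θ s t)) q.1 q.2) HP := by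
    have := int_V2uu h hθ
    apply this.congr
    apply Filter.Eventually.of_forall
    intro q
    ring
  -- Step A : rewrite the first integral via (Hop - σ) w₁ pairing
  have stepA : intHalf (fun s t =>
        (2 * deriv σ θ * (Vpot θ s t)^2 -
          2 * σ θ * Vpot θ s t * (- t * Real.sin θ - s * Real.cos θ))
          * (-(deriv σ θ / 2) * (s * pd1 (u θ) s t + t * pd2 (u θ) s t) + -(σ θ) * pdθ u θ s t) * u θ s t)
      = intHalf (fun s t => Hop θ (fun s' t' => -(deriv σ θ / 2) * (s' * pd1 (u θ) s' t' + t' * pd2 (u θ) s' t') + σ θ * pdθ u θ s' t') s t * ((-(deriv σ θ / 2) * (s * pd1 (u θ) s t + t * pd2 (u θ) s t) + -(σ θ) * pdθ u θ s t)))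
        + (-(σ θ)) * intHalf (fun s t => (-(deriv σ θ / 2) * (s * pd1 (u θ) s t + t * pd2 (u θ) s t) + σ θ * pdθ u θ s t) * (-(deriv σ θ / 2) * (s * pd1 (u θ) s t + t * pd2 (u θ) s t) + -(σ θ) * pdθ u θ s t)) := by
    rw [← intHalf_const_mul, ← intHalf_add iH1w0 (iw1w0.const_mul _)]
    apply intHalf_congr
    intro s t ht
    rw [hH1 s t ht]
    simp only [DVpot]
    ring
  -- Step B : Green's identity
  have stepB : intHalf (fun s t => Hop θ (fun s' t' => -(deriv σ θ / 2) * (s' * pd1 (u θ) s' t' + t' * pd2 (u θ) s' t') + σ θ * pdθ u θ s' t') s t * ((-(deriv σ θ / 2) * (s * pd1 (u θ) s t + t * pd2 (u θ) s t) + -(σ θ) * pdθ u θ s t)))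
      = intHalf (fun s t => (-(deriv σ θ / 2) * (s * pd1 (u θ) s t + t * pd2 (u θ) s t) + σ θ * pdθ u θ s t) * Hop θ (fun s' t' => -(deriv σ θ / 2) * (s' * pd1 (u θ) s' t' + t' * pd2 (u θ) s' t') + -(σ θ) * pdθ u θ s' t') s t) :=
    green nW1 nW0 nmW1 nmW0
  -- Step C : expand using Hop w₀ formula
  have stepC : intHalf (fun s t => (-(deriv σ θ / 2) * (s * pd1 (u θ) s t + t * pd2 (u θ) s t) + σ θ * pdθ u θ s t) * Hop θ (fun s' t' => -(deriv σ θ / 2) * (s' * pd1 (u θ) s' t' + t' * pd2 (u θ) s' t') + -(σ θ) * pdθ u θ s' t') s t)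
      = σ θ * intHalf (fun s t => (-(deriv σ θ / 2) * (s * pd1 (u θ) s t + t * pd2 (u θ) s t) + σ θ * pdθ u θ s t) * (-(deriv σ θ / 2) * (s * pd1 (u θ) s t + t * pd2 (u θ) s t) + -(σ θ) * pdθ u θ s t))
        + ((-((deriv σ θ)^2) * intHalf (fun s t => Vpot θ s t * Vpot θ s t * (u θ s t * (s * pd1 (u θ) s t + t * pd2 (u θ) s t))) + (2 * σ θ * deriv σ θ) * intHalf (fun s t => Vpot θ s t * Vpot θ s t * (u θ s t * pdθ u θ s t))
            + (-(σ θ * deriv σ θ)) * intHalf (fun s t => Vpot θ s t * DVpot θ s t * (u θ s t * (s * pd1 (u θ) s t + t * pd2 (u θ) s t))))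
          + ((2 * (σ θ)^2) * intHalf (fun s t => Vpot θ s t * DVpot θ s t * (u θ s t * pdθ u θ s t)) + (σ θ * (deriv σ θ)^2) * intHalf (fun s t => u θ s t * (s * pd1 (u θ) s t + t * pd2 (u θ) s t))
            + (-(2 * (σ θ)^2 * deriv σ θ)) * intHalf (fun s t => u θ s t * pdθ u θ s t))) := by
    rw [← intHalf_lc3 (-((deriv σ θ)^2)) (2 * σ θ * deriv σ θ) (-(σ θ * deriv σ θ)) iF1 iF2 iF3,
      ← intHalf_lc3 (2 * (σ θ)^2) (σ θ * (deriv σ θ)^2) (-(2 * (σ θ)^2 * deriv σ θ)) iF4 iF5 iF6,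
      ← intHalf_const_mul]
    rw [← intHalf_add
      (f := fun s t => -((deriv σ θ)^2) * ((fun s t => Vpot θ s t * Vpot θ s t * (u θ s t * (s * pd1 (u θ) s t + t * pd2 (u θ) s t))) s t) + (2 * σ θ * deriv σ θ) * ((fun s t => Vpot θ s t * Vpot θ s t * (u θ s t * pdθ u θ s t)) s t)
        + (-(σ θ * deriv σ θ)) * ((fun s t => Vpot θ s t * DVpot θ s t * (u θ s t * (s * pd1 (u θ) s t + t * pd2 (u θ) s t))) s t))
      (g := fun s t => (2 * (σ θ)^2) * ((fun s t => Vpot θ s t * DVpot θ s t * (u θ s t * pdθ u θ s t)) s t) + (σ θ * (deriv σ θ)^2) * ((fun s t => u θ s t * (s * pd1 (u θ) s t + t * pd2 (u θ) s t)) s t)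
        + (-(2 * (σ θ)^2 * deriv σ θ)) * ((fun s t => u θ s t * pdθ u θ s t) s t))
      (((iF1.const_mul _).add (iF2.const_mul _)).add (iF3.const_mul _))
      (((iF4.const_mul _).add (iF5.const_mul _)).add (iF6.const_mul _))]
    rw [← intHalf_add
      (f := fun s t => σ θ * ((-(deriv σ θ / 2) * (s * pd1 (u θ) s t + t * pd2 (u θ) s t) + σ θ * pdθ u θ s t) * (-(deriv σ θ / 2) * (s * pd1 (u θ) s t + t * pd2 (u θ) s t) + -(σ θ) * pdθ u θ s t)))
      (g := fun s t =>
        (-((deriv σ θ)^2) * ((fun s t => Vpot θ s t * Vpot θ s t * (u θ s t * (s * pd1 (u θ) s t + t * pd2 (u θ) s t))) s t) + (2 * σ θ * deriv σ θ) * ((fun s t => Vpot θ s t * Vpot θ s t * (u θ s t * pdθ u θ s t)) s t)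
          + (-(σ θ * deriv σ θ)) * ((fun s t => Vpot θ s t * DVpot θ s t * (u θ s t * (s * pd1 (u θ) s t + t * pd2 (u θ) s t))) s t))
        + ((2 * (σ θ)^2) * ((fun s t => Vpot θ s t * DVpot θ s t * (u θ s t * pdθ u θ s t)) s t) + (σ θ * (deriv σ θ)^2) * ((fun s t => u θ s t * (s * pd1 (u θ) s t + t * pd2 (u θ) s t)) s t)
          + (-(2 * (σ θ)^2 * deriv σ θ)) * ((fun s t => u θ s t * pdθ u θ s t) s t)))
      (iw1w0.const_mul _)
      ((((iF1.const_mul _).add (iF2.const_mul _)).add (iF3.const_mul _)).add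
        (((iF4.const_mul _).add (iF5.const_mul _)).add (iF6.const_mul _)))]
    apply intHalf_congr
    intro s t ht
    rw [hH0 s t ht]
    ring
  -- atom values
  have v1 : intHalf (fun s t => Vpot θ s t * Vpot θ s t * (u θ s t * (s * pd1 (u θ) s t + t * pd2 (u θ) s t))) = - σ θ := scal_V2 h hθ
  have v2 : intHalf (fun s t => Vpot θ s t * Vpot θ s t * (u θ s t * pdθ u θ s t)) = - deriv σ θ / 4 := L_id h hθ
  have v3 : intHalf (fun s t => Vpot θ s t * DVpot θ s t * (u θ s t * (s * pd1 (u θ) s t + t * pd2 (u θ) s t))) = - deriv σ θ := scal_VDV h hθ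
  have v5 : intHalf (fun s t => u θ s t * (s * pd1 (u θ) s t + t * pd2 (u θ) s t)) = -1 := scal_1 h hθ
  have v6 : intHalf (fun s t => u θ s t * pdθ u θ s t) = 0 := E_zero h hθ
  have vG2 : intHalf (fun s t => Vpot θ s t * DVpot θ s t * (u θ s t * u θ s t)) = deriv σ θ / 2 := by
    have := hf_id h hθ
    linarith
  have vG3 : intHalf (fun s t => Vpot θ s t * Vpot θ s t * (u θ s t * u θ s t)) = σ θ / 2 := by
    rw [intHalf_congr (g := fun s t => (Vpot θ s t)^2 * (u θ s t * u θ s t))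
      (fun s t ht => by ring)]
    exact virial h hθ
  have hsig := sigma2_id h hθ
  have hQ : intHalf (fun s t => DVpot θ s t * DVpot θ s t * (u θ s t * u θ s t)) = deriv (deriv σ) θ / 2 + σ θ / 2
      - 2 * intHalf (fun s t => Vpot θ s t * DVpot θ s t * (u θ s t * pdθ u θ s t)) := by
    rw [vG3] at hsig
    linarith
  -- first integral value
  have eI1 : intHalf (fun s t =>
        (2 * deriv σ θ * (Vpot θ s t)^2 -
          2 * σ θ * Vpot θ s t * (- t * Real.sin θ - s * Real.cos θ))
          * (-(deriv σ θ / 2) * (s * pd1 (u θ) s t + t * pd2 (u θ) s t) + -(σ θ) * pdθ u θ s t) * u θ s t)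
      = σ θ * (deriv σ θ)^2 / 2 + 2 * (σ θ)^2 * intHalf (fun s t => Vpot θ s t * DVpot θ s t * (u θ s t * pdθ u θ s t)) := by
    rw [stepA, stepB, stepC, v1, v2, v3, v5, v6]
    ring
  -- second integral value
  have eI2 : intHalf (fun s t =>
        (σ θ * (- t * Real.sin θ - s * Real.cos θ) - deriv σ θ * Vpot θ s t)^2
          * (u θ s t)^2)
      = (σ θ)^2 * intHalf (fun s t => DVpot θ s t * DVpot θ s t * (u θ s t * u θ s t)) + (-(2 * σ θ * deriv σ θ)) * intHalf (fun s t => Vpot θ s t * DVpot θ s t * (u θ s t * u θ s t))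
        + ((deriv σ θ)^2) * intHalf (fun s t => Vpot θ s t * Vpot θ s t * (u θ s t * u θ s t)) := by
    rw [← intHalf_lc3 ((σ θ)^2) (-(2 * σ θ * deriv σ θ)) ((deriv σ θ)^2) iG1 iG2 iG3]
    apply intHalf_congr
    intro s t ht
    simp only [DVpot]
    ring
  rw [eI1, eI2, hQ, vG2, vG3]
  ring

end Final


/-- Lemma 2.10: with `w₀ = −(σ'/2)(s∂_s u_θ + t∂_t u_θ) − σ ∂_θ u_θ`,
`∫ (2σ'V_θ² − 2σV_θ ∂_θV_θ) w₀ u_θ + ∫ (σ∂_θV_θ − σ'V_θ)² u_θ² = (σ²σ'' + σ³)/2`. -/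
theorem w0_identity (a b : ℝ) (u : ℝ → ℝ → ℝ → ℝ) (σ : ℝ → ℝ)
    (h : IsSmoothFamily a b u σ) (θ : ℝ) (hθ : θ ∈ Set.Ioo a b)
    (w₀ : ℝ → ℝ → ℝ)
    (hw₀ : ∀ s t : ℝ, w₀ s t =
      - (deriv σ θ / 2) * (s * pd1 (u θ) s t + t * pd2 (u θ) s t) - σ θ * pdθ u θ s t) :
    intHalf (fun s t =>
        (2 * deriv σ θ * (Vpot θ s t)^2 -
          2 * σ θ * Vpot θ s t * (- t * Real.sin θ - s * Real.cos θ)) * w₀ s t * u θ s t) +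
      intHalf (fun s t =>
        (σ θ * (- t * Real.sin θ - s * Real.cos θ) - deriv σ θ * Vpot θ s t)^2 * (u θ s t)^2)
      = ((σ θ)^2 * deriv (deriv σ) θ + (σ θ)^3) / 2 := by
  have hmain := w0_main h hθ
  have e1 : intHalf (fun s t =>
        (2 * deriv σ θ * (Vpot θ s t)^2 -
          2 * σ θ * Vpot θ s t * (- t * Real.sin θ - s * Real.cos θ)) * w₀ s t * u θ s t)
      = intHalf (fun s t =>
        (2 * deriv σ θ * (Vpot θ s t)^2 -
          2 * σ θ * Vpot θ s t * (- t * Real.sin θ - s * Real.cos θ))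
          * (-(deriv σ θ / 2) * (s * pd1 (u θ) s t + t * pd2 (u θ) s t)
            + -(σ θ) * pdθ u θ s t) * u θ s t) :=
    intHalf_congr (fun s t ht => by rw [hw₀ s t]; ring)
  rw [e1]
  exact hmain
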